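/- arXiv:1802.08933 — 5 statements merged into one kernel-verified Lean document; each statement's English description precedes it below -/
import Mathlib

section
/- If y : [0,1] → [-1,1] is absolutely continuous with |y'(t)| ≤ π·√(1 - y(t)²) for a.e. t, and y(0) ≥ 1 - ε with y(1) = -y(0), then sup_{t ∈ [0,1]} |y(t) - cos(πt)| ≤ √(2ε). -/
open Real MeasureTheory Set

private lemma my_sqrt_add_le {a b : ℝ} (ha : 0 ≤ a) (hb : 0 ≤ b) :
    Real.sqrt (a + b) ≤ Real.sqrt a + Real.sqrt b := by
  have h : a + b ≤ (Real.sqrt a + Real.sqrt b) ^ 2 := by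
    nlinarith [Real.sq_sqrt ha, Real.sq_sqrt hb,
      mul_nonneg (Real.sqrt_nonneg a) (Real.sqrt_nonneg b)]
  calc Real.sqrt (a + b) ≤ Real.sqrt ((Real.sqrt a + Real.sqrt b) ^ 2) := Real.sqrt_le_sqrt h
    _ = _ := Real.sqrt_sq (by positivity)

private lemma my_sq_le_one {u : ℝ} (h1 : -1 ≤ u) (h2 : u ≤ 1) : u ^ 2 ≤ 1 := by nlinarith

private lemma my_sq_lt_one {l : ℝ} (h1 : 0 < l) (h2 : l < 1) : l ^ 2 < 1 := by nlinarith

private lemma my_sq_diff {u v η : ℝ} (hu1 : -1 ≤ u) (hu2 : u ≤ 1) (hv1 : -1 ≤ v) (hv2 : v ≤ 1)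
    (h : |u - v| ≤ η) : u ^ 2 - v ^ 2 ≤ 2 * η := by
  have h' := abs_le.mp h
  nlinarith [h'.1, h'.2]

private lemma my_c_sq1 {c : ℝ} (h1 : 0 ≤ c) (h2 : c ≤ 1) : (1 - c) ^ 2 ≤ 1 := by nlinarith

private lemma my_c_sq2 {c : ℝ} (h1 : 0 ≤ c) (h2 : c ≤ 1) : (1 - c) ^ 2 ≤ 1 - c ^ 2 := by
  nlinarith

private lemma my_arccos_anti {u v : ℝ} (h : u ≤ v) : Real.arccos v ≤ Real.arccos u := by
  rw [Real.arccos_eq_pi_div_two_sub_arcsin, Real.arccos_eq_pi_div_two_sub_arcsin]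
  have := Real.monotone_arcsin h
  linarith

private lemma my_arccos_slope {u v m : ℝ} (hv : -1 < v) (hu : u < 1) (hvu : v < u)
    (hm : 0 < m) (hmu : m ^ 2 ≤ 1 - u ^ 2) (hmv : m ^ 2 ≤ 1 - v ^ 2) :
    Real.arccos v ≤ Real.arccos u + (u - v) / m := by
  obtain ⟨ξ, hξ, hslope⟩ := exists_hasDerivAt_eq_slope Real.arccos
      (fun x => -(1 / Real.sqrt (1 - x ^ 2))) hvu
      Real.continuous_arccos.continuousOn
      (fun x hx => Real.hasDerivAt_arccos (by nlinarith [hx.1]) (by nlinarith [hx.2]))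
  have hξ2 : m ^ 2 ≤ 1 - ξ ^ 2 := by
    rcases le_or_gt 0 ξ with h0 | h0
    · nlinarith [hξ.2]
    · nlinarith [hξ.1]
  have hsξ : m ≤ Real.sqrt (1 - ξ ^ 2) := by
    have := Real.sqrt_le_sqrt hξ2
    rwa [Real.sqrt_sq hm.le] at this
  have hs0 : 0 < Real.sqrt (1 - ξ ^ 2) := lt_of_lt_of_le hm hsξ
  have huv : 0 < u - v := by linarith
  have key : Real.arccos v - Real.arccos u = (u - v) / Real.sqrt (1 - ξ ^ 2) := by
    field_simp at hslope ⊢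
    nlinarith [hslope]
  have : (u - v) / Real.sqrt (1 - ξ ^ 2) ≤ (u - v) / m := by gcongr
  linarith

private lemma my_abs_sin_le {w c : ℝ} (hc : c ≤ π / 2) (h : |w| ≤ c) :
    |Real.sin w| ≤ Real.sin c := by
  have hπ := Real.pi_pos
  have key : Real.sin |w| ≤ Real.sin c :=
    Real.sin_le_sin_of_le_of_le_pi_div_two (by linarith [abs_nonneg w]) hc h
  have habs : |Real.sin w| = Real.sin |w| := by
    rcases le_or_gt 0 w with h0 | h0
    · rw [abs_of_nonneg h0,
        abs_of_nonneg (Real.sin_nonneg_of_nonneg_of_le_pi h0 (by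
          rw [abs_of_nonneg h0] at h; linarith))]
    · calc |Real.sin w| = |Real.sin (-w)| := by rw [Real.sin_neg, abs_neg]
        _ = Real.sin (-w) := abs_of_nonneg (Real.sin_nonneg_of_nonneg_of_le_pi (by linarith)
            (by rw [abs_of_neg h0] at h; linarith))
        _ = Real.sin |w| := by rw [abs_of_neg h0]
  rw [habs]; exact key

private lemma my_cos_diff {X Y θ : ℝ} (hθπ : θ ≤ π) (habs : |X - Y| ≤ θ) :
    |Real.cos X - Real.cos Y| ≤ 2 * Real.sin (θ / 2) := by
  have hπ := Real.pi_pos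
  rw [Real.cos_sub_cos]
  have h1 : |Real.sin ((X + Y) / 2)| ≤ 1 := Real.abs_sin_le_one _
  have h2 : |Real.sin ((X - Y) / 2)| ≤ Real.sin (θ / 2) := by
    apply my_abs_sin_le (by linarith)
    rw [abs_div, abs_of_nonneg (by norm_num : (0:ℝ) ≤ 2)]
    linarith
  have h3 : 0 ≤ Real.sin (θ / 2) := le_trans (abs_nonneg _) h2
  calc |(-2) * Real.sin ((X + Y) / 2) * Real.sin ((X - Y) / 2)|
      = 2 * (|Real.sin ((X + Y) / 2)| * |Real.sin ((X - Y) / 2)|) := by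
        rw [abs_mul, abs_mul]; norm_num; ring
    _ ≤ 2 * (1 * Real.sin (θ / 2)) := by
        apply mul_le_mul_of_nonneg_left _ (by norm_num)
        exact mul_le_mul h1 h2 (abs_nonneg _) (by norm_num)
    _ = 2 * Real.sin (θ / 2) := by ring

set_option maxHeartbeats 1000000 in
theorem stmt_1 (ε : ℝ) (hε : 0 < ε) (y g : ℝ → ℝ)
    (hrange : ∀ t ∈ Icc (0:ℝ) 1, y t ∈ Icc (-1:ℝ) 1)
    (hint : IntervalIntegrable g volume 0 1)
    (hAC : ∀ t ∈ Icc (0:ℝ) 1, y t = y 0 + ∫ s in (0:ℝ)..t, g s)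
    (hbound : ∀ᵐ t ∂(volume : Measure ℝ), t ∈ Icc (0:ℝ) 1 →
      |g t| ≤ π * Real.sqrt (1 - (y t) ^ 2))
    (h0 : 1 - ε ≤ y 0) (h1 : y 1 = -(y 0)) :
    ∀ t ∈ Icc (0:ℝ) 1, |y t - Real.cos (π * t)| ≤ Real.sqrt (2 * ε) := by
  have hπ := Real.pi_pos
  -- continuity of y on [0,1]
  have hycont : ContinuousOn y (Icc (0:ℝ) 1) := by
    have h1' : ContinuousOn (fun t => y 0 + ∫ s in (0:ℝ)..t, g s) (Icc (0:ℝ) 1) := by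
      apply continuousOn_const.add
      have := intervalIntegral.continuousOn_primitive_interval' hint
        (a := 0) (by rw [uIcc_of_le (by norm_num : (0:ℝ) ≤ 1)]; exact ⟨le_rfl, by norm_num⟩)
      rwa [uIcc_of_le (by norm_num : (0:ℝ) ≤ 1)] at this
    exact h1'.congr (fun t ht => hAC t ht)
  -- one-sided decrease bound from the integral inequality
  have hdec : ∀ t ∈ Icc (0:ℝ) 1, ∀ t' ∈ Icc (0:ℝ) 1, t ≤ t' → ∀ C : ℝ, 0 ≤ C →
      (∀ s ∈ Icc t t', Real.sqrt (1 - (y s) ^ 2) ≤ C) → y t - y t' ≤ π * C * (t' - t) := by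
    intro t ht t' ht' htt' C hC hCs
    have hsub1 : IntervalIntegrable g volume 0 t := hint.mono_set (by
      rw [uIcc_of_le ht.1, uIcc_of_le (by norm_num : (0:ℝ) ≤ 1)]
      exact Icc_subset_Icc le_rfl ht.2)
    have hsub2 : IntervalIntegrable g volume t t' := hint.mono_set (by
      rw [uIcc_of_le htt', uIcc_of_le (by norm_num : (0:ℝ) ≤ 1)]
      exact Icc_subset_Icc ht.1 ht'.2)
    have hadd := intervalIntegral.integral_add_adjacent_intervals hsub1 hsub2
    have hyy : y t' - y t = ∫ s in t..t', g s := by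
      rw [hAC t ht, hAC t' ht', ← hadd]; ring
    have habs : |∫ s in t..t', g s| ≤ ∫ s in t..t', |g s| := by
      simpa [Real.norm_eq_abs] using
        intervalIntegral.norm_integral_le_integral_norm (μ := volume) (f := g) htt'
    have hmono : (∫ s in t..t', |g s|) ≤ ∫ s in t..t', (π * C : ℝ) := by
      apply intervalIntegral.integral_mono_ae_restrict htt' hsub2.abs intervalIntegrable_const
      have hmem : ∀ᵐ s ∂(volume.restrict (Icc t t')), s ∈ Icc t t' :=
        ae_restrict_mem measurableSet_Icc
      have hb2 : ∀ᵐ s ∂(volume.restrict (Icc t t')), s ∈ Icc (0:ℝ) 1 →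
          |g s| ≤ π * Real.sqrt (1 - (y s) ^ 2) := ae_restrict_of_ae hbound
      filter_upwards [hmem, hb2] with s hs1 hs2
      have hs01 : s ∈ Icc (0:ℝ) 1 := ⟨le_trans ht.1 hs1.1, le_trans hs1.2 ht'.2⟩
      calc |g s| ≤ π * Real.sqrt (1 - (y s) ^ 2) := hs2 hs01
        _ ≤ π * C := mul_le_mul_of_nonneg_left (hCs s hs1) hπ.le
    have hconst : (∫ s in t..t', (π * C : ℝ)) = π * C * (t' - t) := by
      simp [intervalIntegral.integral_const]; ring
    calc y t - y t' = -(∫ s in t..t', g s) := by linarith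
      _ ≤ |∫ s in t..t', g s| := neg_le_abs _
      _ ≤ ∫ s in t..t', |g s| := habs
      _ ≤ ∫ s in t..t', (π * C : ℝ) := hmono
      _ = π * C * (t' - t) := hconst
  -- the key one-sided Lipschitz bound for arccos (l * y ·), with slack δ
  have key0 : ∀ l : ℝ, 0 < l → l < 1 → ∀ δ : ℝ, 0 < δ → ∀ a, a ∈ Icc (0:ℝ) 1 →
      ∀ b, b ∈ Icc (0:ℝ) 1 → a ≤ b →
      Real.arccos (l * y b) ≤ Real.arccos (l * y a) + (π + δ) * (b - a) := by
    intro l hl0 hl1 δ hδ a ha b hb hab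
    set S : Set ℝ := {t | Real.arccos (l * y t) ≤ Real.arccos (l * y a) + (π + δ) * (t - a)}
      with hS
    have hfc : ContinuousOn
        (fun t => Real.arccos (l * y t) - (Real.arccos (l * y a) + (π + δ) * (t - a)))
        (Icc a b) := by
      apply ContinuousOn.sub
      · exact Real.continuous_arccos.comp_continuousOn
          (continuousOn_const.mul (hycont.mono (Icc_subset_Icc ha.1 hb.2)))
      · exact (continuous_const.add
          (continuous_const.mul (continuous_id.sub continuous_const))).continuousOn
    have hclosed : IsClosed (S ∩ Icc a b) := by
      have hcl := hfc.preimage_isClosed_of_isClosed isClosed_Icc (isClosed_Iic (a := (0:ℝ)))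
      have heq : S ∩ Icc a b = Icc a b ∩
          (fun t => Real.arccos (l * y t) - (Real.arccos (l * y a) + (π + δ) * (t - a)))
            ⁻¹' (Iic 0) := by
        ext t
        simp only [hS, Set.mem_inter_iff, Set.mem_setOf_eq, Set.mem_preimage, Set.mem_Iic]
        constructor
        · rintro ⟨h1', h2'⟩; exact ⟨h2', by linarith⟩
        · rintro ⟨h1', h2'⟩; exact ⟨by linarith, h1'⟩
      rw [heq]; exact hcl
    have hmemS : Icc a b ⊆ S := by
      apply hclosed.Icc_subset_of_forall_exists_gt
      · simp [hS]
      · intro x hx z hz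
        have hxs : x ∈ S := hx.1
        have hxa : a ≤ x := hx.2.1
        have hxb : x < b := hx.2.2
        have hx01 : x ∈ Icc (0:ℝ) 1 := ⟨le_trans ha.1 hxa, le_trans hxb.le hb.2⟩
        have hyx := hrange x hx01
        have hyx2 : (y x) ^ 2 ≤ 1 := my_sq_le_one hyx.1 hyx.2
        have hl2' : l ^ 2 < 1 := my_sq_lt_one hl0 hl1
        have hl2 : l ^ 2 ≤ 1 := hl2'.le
        have hprod : l ^ 2 * (y x) ^ 2 ≤ l ^ 2 := mul_le_of_le_one_right (sq_nonneg l) hyx2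
        have hprod2 : l ^ 2 * (y x) ^ 2 ≤ (y x) ^ 2 := mul_le_of_le_one_left (sq_nonneg _) hl2
        have hBarg : 0 < 1 - l ^ 2 * (y x) ^ 2 := by linarith
        set B := Real.sqrt (1 - l ^ 2 * (y x) ^ 2) with hB
        have hB2 : B ^ 2 = 1 - l ^ 2 * (y x) ^ 2 := Real.sq_sqrt hBarg.le
        have hBpos : 0 < B := Real.sqrt_pos.mpr hBarg
        set c := δ / (2 * π + δ) with hc
        have hc0 : 0 < c := div_pos hδ (by linarith)
        have hc1 : c < 1 := by rw [hc, div_lt_one (by linarith)]; linarith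
        set η := c ^ 2 * B ^ 2 / 2 with hη
        have hηpos : 0 < η := by positivity
        have hcw : ContinuousWithinAt y (Icc (0:ℝ) 1) x := hycont x hx01
        rw [Metric.continuousWithinAt_iff] at hcw
        obtain ⟨d, hd0, hd⟩ := hcw η hηpos
        set t' := min (min (x + d / 2) z) b with ht'def
        have hxt' : x < t' := lt_min (lt_min (by linarith) hz) hxb
        have ht'b : t' ≤ b := min_le_right _ _
        have ht'z : t' ≤ z := le_trans (min_le_left _ _) (min_le_right _ _)
        have ht'01 : t' ∈ Icc (0:ℝ) 1 := ⟨le_trans hx01.1 hxt'.le, le_trans ht'b hb.2⟩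
        have hnear : ∀ s ∈ Icc x t', |y s - y x| ≤ η := by
          intro s hs
          have hs01 : s ∈ Icc (0:ℝ) 1 := ⟨le_trans hx01.1 hs.1, le_trans hs.2 ht'01.2⟩
          have hds : dist s x < d := by
            rw [Real.dist_eq, abs_of_nonneg (by linarith [hs.1])]
            have : s ≤ x + d / 2 := le_trans hs.2 (le_trans (min_le_left _ _) (min_le_left _ _))
            linarith
          have := hd hs01 hds
          rw [Real.dist_eq] at this
          exact this.le
        set A := Real.sqrt (1 - (y x) ^ 2) with hA
        have hA2 : A ^ 2 = 1 - (y x) ^ 2 := Real.sq_sqrt (by nlinarith [hyx.1, hyx.2])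
        have hA0 : 0 ≤ A := Real.sqrt_nonneg _
        have hAB : A ≤ B := Real.sqrt_le_sqrt (by linarith)
        have hCs : ∀ s ∈ Icc x t', Real.sqrt (1 - (y s) ^ 2) ≤ A + c * B := by
          intro s hs
          have hs01 : s ∈ Icc (0:ℝ) 1 := ⟨le_trans hx01.1 hs.1, le_trans hs.2 ht'01.2⟩
          have hys := hrange s hs01
          have hd2 : (y x) ^ 2 - (y s) ^ 2 ≤ 2 * η :=
            my_sq_diff hyx.1 hyx.2 hys.1 hys.2 (by rw [abs_sub_comm]; exact hnear s hs)
          have h1' : 1 - (y s) ^ 2 ≤ A ^ 2 + 2 * η := by linarith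
          calc Real.sqrt (1 - (y s) ^ 2) ≤ Real.sqrt (A ^ 2 + 2 * η) := Real.sqrt_le_sqrt h1'
            _ ≤ Real.sqrt (A ^ 2) + Real.sqrt (2 * η) := my_sqrt_add_le (by positivity) (by positivity)
            _ = A + c * B := by
                rw [Real.sqrt_sq hA0]
                congr 1
                rw [hη, show 2 * (c ^ 2 * B ^ 2 / 2) = (c * B) ^ 2 by ring,
                  Real.sqrt_sq (by positivity)]
        have hdec' : y x - y t' ≤ π * (A + c * B) * (t' - x) :=
          hdec x hx01 t' ht'01 hxt'.le (A + c * B) (by positivity) hCs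
        refine ⟨t', ?_, hxt', ht'z⟩
        have hgoal : Real.arccos (l * y t') ≤ Real.arccos (l * y x) + (π + δ) * (t' - x) := by
          rcases le_or_gt (y x) (y t') with hcase | hcase
          · have hanti := my_arccos_anti (mul_le_mul_of_nonneg_left hcase hl0.le)
            have hpos : (0:ℝ) ≤ (π + δ) * (t' - x) :=
              mul_nonneg (by linarith) (by linarith)
            linarith
          · set m := (1 - c) * B with hm
            have hm0 : 0 < m := mul_pos (by linarith) hBpos
            have hyt' := hrange t' ht'01
            have h_u : l * y x < 1 := by
              calc l * y x ≤ l * 1 := mul_le_mul_of_nonneg_left hyx.2 hl0.le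
                _ = l := mul_one l
                _ < 1 := hl1
            have h_v : -1 < l * y t' := by
              have h9 := mul_le_mul_of_nonneg_left hyt'.1 hl0.le
              have h10 : l * (-1) = -l := mul_neg_one l
              linarith
            have h_vu : l * y t' < l * y x := mul_lt_mul_of_pos_left hcase hl0
            have h7 : (1 - c) ^ 2 ≤ 1 := my_c_sq1 hc0.le hc1.le
            have hmu : m ^ 2 ≤ 1 - (l * y x) ^ 2 := by
              calc m ^ 2 = (1 - c) ^ 2 * B ^ 2 := by rw [hm]; ring
                _ ≤ 1 * B ^ 2 := mul_le_mul_of_nonneg_right h7 (sq_nonneg B)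
                _ = 1 - (l * y x) ^ 2 := by rw [one_mul, hB2]; ring
            have habs2 : (y t') ^ 2 - (y x) ^ 2 ≤ 2 * η :=
              my_sq_diff hyt'.1 hyt'.2 hyx.1 hyx.2 (hnear t' ⟨hxt'.le, le_rfl⟩)
            have h3 : l ^ 2 * (y t') ^ 2 ≤ l ^ 2 * (y x) ^ 2 + 2 * η := by
              have h4 := mul_le_mul_of_nonneg_left habs2 (sq_nonneg l)
              have h5 : l ^ 2 * (2 * η) ≤ 2 * η := mul_le_of_le_one_left (by positivity) hl2
              linarith [h4, h5]
            have h8 : (1 - c) ^ 2 ≤ 1 - c ^ 2 := my_c_sq2 hc0.le hc1.le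
            have hmv : m ^ 2 ≤ 1 - (l * y t') ^ 2 := by
              calc m ^ 2 = (1 - c) ^ 2 * B ^ 2 := by rw [hm]; ring
                _ ≤ (1 - c ^ 2) * B ^ 2 := mul_le_mul_of_nonneg_right h8 (sq_nonneg B)
                _ = B ^ 2 - 2 * η := by rw [hη]; ring
                _ = 1 - l ^ 2 * (y x) ^ 2 - 2 * η := by rw [hB2]
                _ ≤ 1 - l ^ 2 * (y t') ^ 2 := by linarith
                _ = 1 - (l * y t') ^ 2 := by ring
            have hslope := my_arccos_slope h_v h_u h_vu hm0 hmu hmv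
            have hnum : l * y x - l * y t' ≤ π * (A + c * B) * (t' - x) := by
              calc l * y x - l * y t' = l * (y x - y t') := by ring
                _ ≤ 1 * (y x - y t') := mul_le_mul_of_nonneg_right hl1.le (by linarith)
                _ = y x - y t' := one_mul _
                _ ≤ π * (A + c * B) * (t' - x) := hdec'
            have hkey : π * (A + c * B) ≤ (π + δ) * m := by
              have hid : π * (1 + c) = (π + δ) * (1 - c) := by
                rw [hc]; field_simp; ring
              calc π * (A + c * B) ≤ π * (B + c * B) :=
                    mul_le_mul_of_nonneg_left (by linarith) hπ.le
                _ = π * (1 + c) * B := by ring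
                _ = (π + δ) * (1 - c) * B := by rw [hid]
                _ = (π + δ) * m := by rw [hm]; ring
            have hfrac : (l * y x - l * y t') / m ≤ (π + δ) * (t' - x) := by
              rw [div_le_iff₀ hm0]
              calc l * y x - l * y t' ≤ π * (A + c * B) * (t' - x) := hnum
                _ ≤ (π + δ) * m * (t' - x) := mul_le_mul_of_nonneg_right hkey (by linarith)
                _ = (π + δ) * (t' - x) * m := by ring
            linarith
        have hxs' : Real.arccos (l * y x) ≤ Real.arccos (l * y a) + (π + δ) * (x - a) := hxs
        have hring : (π + δ) * (x - a) + (π + δ) * (t' - x) = (π + δ) * (t' - a) := by ring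
        show Real.arccos (l * y t') ≤ Real.arccos (l * y a) + (π + δ) * (t' - a)
        linarith
    exact hmemS ⟨hab, le_rfl⟩
  -- remove the slack δ
  have key1 : ∀ l : ℝ, 0 < l → l < 1 → ∀ a, a ∈ Icc (0:ℝ) 1 → ∀ b, b ∈ Icc (0:ℝ) 1 →
      a ≤ b → Real.arccos (l * y b) ≤ Real.arccos (l * y a) + π * (b - a) := by
    intro l hl0 hl1 a ha b hb hab
    apply le_of_forall_pos_le_add
    intro ε' hε'
    have hδ : 0 < ε' / (b - a + 1) := div_pos hε' (by linarith)
    have hk := key0 l hl0 hl1 _ hδ a ha b hb hab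
    have hd : (ε' / (b - a + 1)) * (b - a) ≤ ε' := by
      rw [div_mul_eq_mul_div, div_le_iff₀ (by linarith)]
      exact mul_le_mul_of_nonneg_left (by linarith) hε'.le
    have hr : (π + ε' / (b - a + 1)) * (b - a)
        = π * (b - a) + (ε' / (b - a + 1)) * (b - a) := by ring
    linarith
  -- let l → 1
  have key2 : ∀ a, a ∈ Icc (0:ℝ) 1 → ∀ b, b ∈ Icc (0:ℝ) 1 → a ≤ b →
      Real.arccos (y b) ≤ Real.arccos (y a) + π * (b - a) := by
    intro a ha b hb hab
    have htend1 : Filter.Tendsto (fun l : ℝ => Real.arccos (l * y b))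
        (nhdsWithin 1 (Iio 1)) (nhds (Real.arccos (y b))) := by
      have hcont : Continuous (fun l : ℝ => Real.arccos (l * y b)) :=
        Real.continuous_arccos.comp (continuous_id.mul continuous_const)
      have := (hcont.tendsto 1).mono_left (nhdsWithin_le_nhds (s := Iio (1:ℝ)))
      simpa using this
    have htend2 : Filter.Tendsto (fun l : ℝ => Real.arccos (l * y a) + π * (b - a))
        (nhdsWithin 1 (Iio 1)) (nhds (Real.arccos (y a) + π * (b - a))) := by
      have hcont : Continuous (fun l : ℝ => Real.arccos (l * y a) + π * (b - a)) :=
        (Real.continuous_arccos.comp (continuous_id.mul continuous_const)).add continuous_const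
      have := (hcont.tendsto 1).mono_left (nhdsWithin_le_nhds (s := Iio (1:ℝ)))
      simpa using this
    have hev : ∀ᶠ l in nhdsWithin (1:ℝ) (Iio 1),
        Real.arccos (l * y b) ≤ Real.arccos (l * y a) + π * (b - a) := by
      filter_upwards [Ioo_mem_nhdsLT_of_mem (show (1:ℝ) ∈ Ioc (0:ℝ) 1 by norm_num)] with l hl
      exact key1 l hl.1 hl.2 a ha b hb hab
    exact le_of_tendsto_of_tendsto htend1 htend2 hev
  -- conclude
  intro t ht
  have hyt := hrange t ht
  have hy0 := hrange 0 ⟨le_rfl, by norm_num⟩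
  have h0mem : (0:ℝ) ∈ Icc (0:ℝ) 1 := ⟨le_rfl, by norm_num⟩
  have h1mem : (1:ℝ) ∈ Icc (0:ℝ) 1 := ⟨by norm_num, le_rfl⟩
  have hub : Real.arccos (y t) ≤ Real.arccos (y 0) + π * t := by
    have := key2 0 h0mem t ht ht.1
    simpa using this
  have hlb : π * t - Real.arccos (y 0) ≤ Real.arccos (y t) := by
    have := key2 t ht 1 h1mem ht.2
    rw [h1, Real.arccos_neg] at this
    linarith
  set θ0 := Real.arccos (y 0) with hθ0
  have hθ0π : θ0 ≤ π := Real.arccos_le_pi _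
  have hθ00 : 0 ≤ θ0 := Real.arccos_nonneg _
  have hXY : |Real.arccos (y t) - π * t| ≤ θ0 := abs_le.mpr ⟨by linarith, by linarith⟩
  have hmain : |y t - Real.cos (π * t)| ≤ 2 * Real.sin (θ0 / 2) := by
    calc |y t - Real.cos (π * t)|
        = |Real.cos (Real.arccos (y t)) - Real.cos (π * t)| := by
          rw [Real.cos_arccos hyt.1 hyt.2]
      _ ≤ 2 * Real.sin (θ0 / 2) := my_cos_diff hθ0π hXY
  have hsin : 2 * Real.sin (θ0 / 2) ≤ Real.sqrt (2 * ε) := by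
    have habs1 : |Real.sin (θ0 / 2)| = Real.sqrt ((1 - Real.cos θ0) / 2) :=
      Real.abs_sin_half θ0
    have hcos : Real.cos θ0 = y 0 := Real.cos_arccos hy0.1 hy0.2
    have hsin0 : 0 ≤ Real.sin (θ0 / 2) :=
      Real.sin_nonneg_of_nonneg_of_le_pi (by linarith) (by linarith)
    calc 2 * Real.sin (θ0 / 2) = 2 * Real.sqrt ((1 - y 0) / 2) := by
          rw [← abs_of_nonneg hsin0, habs1, hcos]
      _ = Real.sqrt (2 * (1 - y 0)) := by
          rw [show (2:ℝ) * (1 - y 0) = 2 ^ 2 * ((1 - y 0) / 2) by ring,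
            Real.sqrt_mul (by norm_num) _, Real.sqrt_sq (by norm_num)]
      _ ≤ Real.sqrt (2 * ε) := Real.sqrt_le_sqrt (by linarith)
  linarith
end

section
/- Let U : ℤ × [0,∞) → ℤ be a swap function (for each t, U(·,t) is a bijection of ℤ; for each x, U(x,·) is cadlag with jumps ±1; swaps are exchanges of adjacent values). If particle x has crossed a line L(t) = qt + x by time t but has not swapped with particle x₀, or has swapped with x₀ but not crossed L, then the number of such particles at time t is less than |U(x₀, t) - L(t)| + 1. -/
open Real Set

private lemma stmt_12_aux (U : ℤ → ℝ → ℤ) (x₀ : ℤ) (q t : ℝ)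
    (hbij : ∀ s : ℝ, Function.Bijective (fun x => U x s))
    (h0 : ∀ x : ℤ, U x 0 = x)
    (A : Set ℤ)
    (hA : ∀ x : ℤ, x ∈ A ↔
      ((((U x 0 : ℝ) ≤ q * 0 + (x₀ : ℝ) ∧ (U x t : ℝ) > q * t + (x₀ : ℝ)) ∨
        ((U x 0 : ℝ) > q * 0 + (x₀ : ℝ) ∧ (U x t : ℝ) ≤ q * t + (x₀ : ℝ))) ∧
        ¬ ((U x 0 < U x₀ 0 ∧ U x t > U x₀ t) ∨ (U x 0 > U x₀ 0 ∧ U x t < U x₀ t))) ∨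
      (((U x 0 < U x₀ 0 ∧ U x t > U x₀ t) ∨ (U x 0 > U x₀ 0 ∧ U x t < U x₀ t)) ∧
        ¬ (((U x 0 : ℝ) ≤ q * 0 + (x₀ : ℝ) ∧ (U x t : ℝ) > q * t + (x₀ : ℝ)) ∨
           ((U x 0 : ℝ) > q * 0 + (x₀ : ℝ) ∧ (U x t : ℝ) ≤ q * t + (x₀ : ℝ))))) :
    A.Finite ∧ (A.ncard : ℝ) < |(U x₀ t : ℝ) - (q * t + (x₀ : ℝ))| + 1 := by
  have hinj : Function.Injective (fun x => U x t) := (hbij t).1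
  set ℓ : ℝ := q * t + (x₀ : ℝ) with hℓ
  set a : ℤ := U x₀ t with ha
  set b : ℤ := ⌊ℓ⌋ with hb
  have hbl : (b : ℝ) ≤ ℓ := Int.floor_le ℓ
  have hlb : ℓ - 1 < (b : ℝ) := Int.sub_one_lt_floor ℓ
  set T : Finset ℤ := Finset.Ioc b a ∪ Finset.Ioc a b with hT
  have key : ∀ x ∈ A, U x t ∈ T := by
    intro x hx
    have hx' := (hA x).mp hx
    set m : ℤ := U x t with hm
    have hne : x ≠ x₀ → m ≠ a := fun h hc => h (hinj hc)
    have hmem : (b < m ∧ m ≤ a) ∨ (a < m ∧ m ≤ b) → m ∈ T := by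
      intro h
      simp only [hT, Finset.mem_union, Finset.mem_Ioc]
      exact h
    apply hmem
    have hU0x : U x 0 = x := h0 x
    have hU0x0 : U x₀ 0 = x₀ := h0 x₀
    have hL0 : q * 0 + (x₀ : ℝ) = (x₀ : ℝ) := by ring
    rw [hU0x, hU0x0, hL0] at hx'
    rcases hx' with ⟨hc, hs⟩ | ⟨hs, hc⟩
    · push_neg at hs
      obtain ⟨hs1, hs2⟩ := hs
      rcases hc with ⟨h1, h2⟩ | ⟨h1, h2⟩
      · have hxle : x ≤ x₀ := by exact_mod_cast h1
        have hbm : b < m := Int.floor_lt.mpr h2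
        rcases eq_or_lt_of_le hxle with heq | hlt
        · left; exact ⟨hbm, le_of_eq (by rw [hm, ha, heq])⟩
        · exact Or.inl ⟨hbm, hs1 hlt⟩
      · have hxgt : x₀ < x := by exact_mod_cast h1
        have hmb : m ≤ b := Int.le_floor.mpr h2
        have ham : a ≤ m := hs2 hxgt
        have : m ≠ a := hne (by omega)
        exact Or.inr ⟨by omega, hmb⟩
    · push_neg at hc
      obtain ⟨hc1, hc2⟩ := hc
      rcases hs with ⟨h1, h2⟩ | ⟨h1, h2⟩
      · have : (m : ℝ) ≤ ℓ := hc1 (by exact_mod_cast h1.le)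
        exact Or.inr ⟨h2, Int.le_floor.mpr this⟩
      · have : ℓ < (m : ℝ) := hc2 (by exact_mod_cast h1)
        exact Or.inl ⟨Int.floor_lt.mpr this, h2.le⟩
  have hsub : A ⊆ (fun x => U x t) ⁻¹' (↑T : Set ℤ) := by
    intro x hx; simpa using key x hx
  have hfin : A.Finite :=
    Set.Finite.subset (Set.Finite.preimage hinj.injOn T.finite_toSet) hsub
  have himg : (fun x => U x t) '' A ⊆ (↑T : Set ℤ) := by
    rintro _ ⟨x, hx, rfl⟩; exact key x hx
  have hcard : A.ncard ≤ T.card := by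
    calc A.ncard = ((fun x => U x t) '' A).ncard :=
          (Set.ncard_image_of_injective A hinj).symm
      _ ≤ (↑T : Set ℤ).ncard := Set.ncard_le_ncard himg T.finite_toSet
      _ = T.card := by simp [Set.ncard_coe_finset]
  have hTcard : T.card ≤ (a - b).natAbs := by
    have h1 : T.card ≤ (Finset.Ioc b a).card + (Finset.Ioc a b).card :=
      Finset.card_union_le _ _
    rw [Int.card_Ioc, Int.card_Ioc] at h1
    omega
  refine ⟨hfin, ?_⟩
  have hcast : (((a - b).natAbs : ℕ) : ℝ) = |(a : ℝ) - (b : ℝ)| := by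
    rw [Nat.cast_natAbs]; push_cast; ring_nf
  have hle2 : (A.ncard : ℝ) ≤ |(a : ℝ) - (b : ℝ)| := by
    rw [← hcast]
    exact_mod_cast le_trans hcard hTcard
  rcases abs_cases ((a : ℝ) - (b : ℝ)) with ⟨he, _⟩ | ⟨he, _⟩ <;>
    rcases abs_cases ((a : ℝ) - ℓ) with ⟨he2, _⟩ | ⟨he2, _⟩ <;> linarith

/-- `stmt_12`: in a swap function `U` (particles labelled by their initial positions,
`U(·,s)` a bijection of `ℤ` at each time), the number of particles whose status of
"crossed the line `L(s) = q·s + x₀` by time `t`" differs from their status of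
"swapped with particle `x₀` by time `t`" is less than `|U(x₀,t) - L(t)| + 1`. -/
theorem stmt_12 (U : ℤ → ℝ → ℤ) (x₀ : ℤ) (q t : ℝ) (ht : 0 ≤ t)
    (hbij : ∀ s : ℝ, Function.Bijective (fun x => U x s))
    (h0 : ∀ x : ℤ, U x 0 = x) :
    letI L : ℝ → ℝ := fun s => q * s + (x₀ : ℝ)
    letI crossed : ℤ → Prop := fun x =>
      ((U x 0 : ℝ) ≤ L 0 ∧ (U x t : ℝ) > L t) ∨ ((U x 0 : ℝ) > L 0 ∧ (U x t : ℝ) ≤ L t)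
    letI swapped : ℤ → Prop := fun x =>
      (U x 0 < U x₀ 0 ∧ U x t > U x₀ t) ∨ (U x 0 > U x₀ 0 ∧ U x t < U x₀ t)
    letI A : Set ℤ := {x | (crossed x ∧ ¬ swapped x) ∨ (swapped x ∧ ¬ crossed x)}
    A.Finite ∧ (A.ncard : ℝ) < |(U x₀ t : ℝ) - L t| + 1 := by
  exact stmt_12_aux U x₀ q t hbij h0 _ (fun x => Iff.rfl)
end

section
/- Suppose f : [0,1] → ℝ is continuous and for all rational p < q in [0,1] and all k ∈ ℕ, |f(q) - f(p)|/(q - p) ≤ π·√(1 - m(p,q)²) + 1/k, where m(p,q) = inf{|f(t)| : t ∈ [p,q]}. Then f is absolutely continuous and |f'(t)| ≤ π·√(1 - f(t)²) for almost every t. -/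
open Real MeasureTheory Set
open Filter Topology
lemma lipschitz_ftc {F : ℝ → ℝ} {C : NNReal} (hF : LipschitzWith C F) (t : ℝ) :
    F t = F 0 + ∫ s in (0:ℝ)..t, deriv F s := by
  have cont : Continuous F := hF.continuous
  have hInt : ∀ a b : ℝ, IntervalIntegrable F volume a b := fun a b => cont.intervalIntegrable a b
  set G : ℝ → ℝ := fun u => ∫ s in (0:ℝ)..u, F s with hGdef
  have hG : ∀ u : ℝ, HasDerivAt G (F u) u := fun u =>
    intervalIntegral.integral_hasDerivAt_right (hInt 0 u)
      (cont.stronglyMeasurableAtFilter _ _) cont.continuousAt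
  have key : Tendsto (fun h : ℝ => h⁻¹ • (G (t + h) - G t) - h⁻¹ • (G (0 + h) - G 0)) (𝓝[>] 0)
      (𝓝 (F t - F 0)) :=
    ((hG t).tendsto_slope_zero_right).sub ((hG 0).tendsto_slope_zero_right)
  have hdct : Tendsto (fun h : ℝ => ∫ x in (0:ℝ)..t, (F (x + h) - F x) / h) (𝓝[>] 0)
      (𝓝 (∫ x in (0:ℝ)..t, deriv F x)) := by
    apply intervalIntegral.tendsto_integral_filter_of_dominated_convergence (fun _ => (C : ℝ))
    · exact Eventually.of_forall fun h =>
        (((cont.comp (continuous_id.add continuous_const)).sub cont).div_const h).aestronglyMeasurable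
    · filter_upwards [self_mem_nhdsWithin] with h hh
      have hh' : (0:ℝ) < h := hh
      refine Eventually.of_forall fun x => fun _ => ?_
      have hb := hF.dist_le_mul (x + h) x
      rw [Real.dist_eq, Real.dist_eq] at hb
      simp only [add_sub_cancel_left, abs_of_pos hh'] at hb
      rw [norm_div, Real.norm_eq_abs, Real.norm_eq_abs, abs_of_pos hh', div_le_iff₀ hh']
      exact hb
    · exact intervalIntegrable_const
    · filter_upwards [hF.ae_differentiableAt_real] with x hx _
      have := (hx.hasDerivAt).tendsto_slope_zero_right
      simpa [smul_eq_mul, div_eq_inv_mul] using this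
  have heq : ∀ᶠ h in 𝓝[>] (0:ℝ),
      (∫ x in (0:ℝ)..t, (F (x + h) - F x) / h) =
        h⁻¹ • (G (t + h) - G t) - h⁻¹ • (G (0 + h) - G 0) := by
    filter_upwards [self_mem_nhdsWithin] with h hh
    have hne : h ≠ 0 := ne_of_gt hh
    have e1 : (∫ x in (0:ℝ)..t, F (x + h)) = G (t + h) - G h := by
      rw [intervalIntegral.integral_comp_add_right, zero_add]
      have := intervalIntegral.integral_interval_sub_left (hInt 0 (t + h)) (hInt 0 h)
      simpa [hGdef] using this.symm
    have cShift : Continuous fun x : ℝ => F (x + h) := cont.comp (continuous_add_right h)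
    have e2 : (∫ x in (0:ℝ)..t, (F (x + h) - F x) / h)
        = ((∫ x in (0:ℝ)..t, F (x + h)) - G t) / h := by
      rw [intervalIntegral.integral_div,
        intervalIntegral.integral_sub (cShift.intervalIntegrable _ _) (hInt 0 t)]
    have e3 : G 0 = 0 := intervalIntegral.integral_same
    rw [e2, e1, e3, zero_add, smul_eq_mul, smul_eq_mul]
    field_simp
    ring
  have := tendsto_nhds_unique ((tendsto_congr' heq).mp hdct) key
  linarith [this]


theorem stmt_13 (f : ℝ → ℝ)
    (hcont : ContinuousOn f (Icc (0:ℝ) 1))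
    (hrange : ∀ t ∈ Icc (0:ℝ) 1, f t ∈ Icc (-1:ℝ) 1)
    (hdq : ∀ p q : ℚ, (p:ℝ) ∈ Icc (0:ℝ) 1 → (q:ℝ) ∈ Icc (0:ℝ) 1 → (p:ℝ) < q →
      ∀ k : ℕ, 0 < k →
        |f q - f p| / ((q:ℝ) - p) ≤
          π * Real.sqrt (1 - (sInf ((fun t => |f t|) '' Icc (p:ℝ) (q:ℝ))) ^ 2) + 1 / k) :
    ∃ g : ℝ → ℝ, IntervalIntegrable g volume 0 1 ∧
      (∀ t ∈ Icc (0:ℝ) 1, f t = f 0 + ∫ s in (0:ℝ)..t, g s) ∧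
      ∀ᵐ t ∂(volume : Measure ℝ), t ∈ Icc (0:ℝ) 1 →
        |g t| ≤ π * Real.sqrt (1 - (f t) ^ 2) := by
  have hpi : (0:ℝ) ≤ π := le_of_lt Real.pi_pos
  -- small helper for 1/⌈1/ε⌉₊ ≤ ε
  have hceil : ∀ ε : ℝ, 0 < ε → (0 < ⌈1/ε⌉₊ ∧ 1 / ((⌈1/ε⌉₊ : ℕ) : ℝ) ≤ ε) := by
    intro ε hε
    have h1 : (0:ℝ) < 1/ε := by positivity
    have hk0 : 0 < ⌈1/ε⌉₊ := Nat.ceil_pos.mpr h1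
    refine ⟨hk0, ?_⟩
    calc 1 / ((⌈1/ε⌉₊ : ℕ) : ℝ) ≤ 1 / (1/ε) :=
          one_div_le_one_div_of_le h1 (Nat.le_ceil _)
      _ = ε := one_div_one_div ε
  -- rational Lipschitz bound
  have hrat : ∀ p q : ℚ, (p:ℝ) ∈ Icc (0:ℝ) 1 → (q:ℝ) ∈ Icc (0:ℝ) 1 → (p:ℝ) < q →
      |f q - f p| ≤ π * ((q:ℝ) - p) := by
    intro p q hp hq hpq
    have hpos : (0:ℝ) < (q:ℝ) - p := sub_pos.mpr hpq
    have key : |f q - f p| / ((q:ℝ) - p) ≤ π := by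
      refine le_of_forall_pos_le_add fun ε hε => ?_
      obtain ⟨hk0, h1k⟩ := hceil ε hε
      have hq1 := hdq p q hp hq hpq _ hk0
      have hsq : Real.sqrt (1 - (sInf ((fun t => |f t|) '' Icc (p:ℝ) (q:ℝ))) ^ 2) ≤ 1 := by
        have := Real.sqrt_le_sqrt
          (show 1 - (sInf ((fun t => |f t|) '' Icc (p:ℝ) (q:ℝ))) ^ 2 ≤ 1 by
            nlinarith [sq_nonneg (sInf ((fun t => |f t|) '' Icc (p:ℝ) (q:ℝ)))])
        simpa using this
      have : π * Real.sqrt (1 - (sInf ((fun t => |f t|) '' Icc (p:ℝ) (q:ℝ))) ^ 2) ≤ π :=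
        mul_le_of_le_one_right hpi hsq
      linarith
    calc |f q - f p| = |f q - f p| / ((q:ℝ) - p) * ((q:ℝ) - p) := by field_simp
      _ ≤ π * ((q:ℝ) - p) := mul_le_mul_of_nonneg_right key (le_of_lt hpos)
  -- real Lipschitz bound
  have hlipR : ∀ x ∈ Icc (0:ℝ) 1, ∀ y ∈ Icc (0:ℝ) 1, x ≤ y → |f y - f x| ≤ π * (y - x) := by
    intro x hx y hy hxy
    rcases eq_or_lt_of_le hxy with rfl | hlt
    · simp
    refine le_of_forall_pos_le_add fun ε hε => ?_
    obtain ⟨δx, hδx, Hx⟩ := Metric.continuousWithinAt_iff.mp (hcont x hx) (ε/2) (by positivity)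
    obtain ⟨δy, hδy, Hy⟩ := Metric.continuousWithinAt_iff.mp (hcont y hy) (ε/2) (by positivity)
    set δ := min (min δx δy) ((y - x)/2) with hδdef
    have hδ : 0 < δ := lt_min (lt_min hδx hδy) (by linarith)
    have hδ1 : δ ≤ δx := (min_le_left _ _).trans (min_le_left _ _)
    have hδ2 : δ ≤ δy := (min_le_left _ _).trans (min_le_right _ _)
    have hδ3 : δ ≤ (y - x)/2 := min_le_right _ _
    obtain ⟨p, hp1, hp2⟩ := exists_rat_btwn (lt_add_of_pos_right x hδ)
    obtain ⟨q, hq1, hq2⟩ := exists_rat_btwn (sub_lt_self y hδ)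
    have hpq : (p:ℝ) < q := by linarith
    have hpI : (p:ℝ) ∈ Icc (0:ℝ) 1 := ⟨by linarith [hx.1], by linarith [hy.2]⟩
    have hqI : (q:ℝ) ∈ Icc (0:ℝ) 1 := ⟨by linarith [hx.1], by linarith [hy.2]⟩
    have e1 : |f p - f x| < ε/2 := by
      have := Hx hpI (by rw [Real.dist_eq]; rw [abs_lt]; constructor <;> linarith)
      rwa [Real.dist_eq] at this
    have e2 : |f q - f y| < ε/2 := by
      have := Hy hqI (by rw [Real.dist_eq]; rw [abs_lt]; constructor <;> linarith)
      rwa [Real.dist_eq] at this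
    have e3 : |f q - f p| ≤ π * ((q:ℝ) - p) := hrat p q hpI hqI hpq
    have e4 : π * ((q:ℝ) - p) ≤ π * (y - x) := mul_le_mul_of_nonneg_left (by linarith) hpi
    have tri : |f y - f x| ≤ |f y - f q| + |f q - f p| + |f p - f x| := by
      have : f y - f x = (f y - f q) + (f q - f p) + (f p - f x) := by ring
      rw [this]; exact abs_add_three _ _ _
    have e2' : |f y - f q| < ε/2 := by rwa [abs_sub_comm] at e2
    linarith
  have hlip : LipschitzOnWith (Real.toNNReal π) f (Icc (0:ℝ) 1) := by
    apply LipschitzOnWith.of_dist_le_mul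
    intro x hx y hy
    rw [Real.dist_eq, Real.dist_eq, Real.coe_toNNReal π hpi]
    rcases le_total x y with h | h
    · calc |f x - f y| = |f y - f x| := abs_sub_comm _ _
        _ ≤ π * (y - x) := hlipR x hx y hy h
        _ = π * |x - y| := by rw [abs_sub_comm, abs_of_nonneg (sub_nonneg.mpr h)]
    · calc |f x - f y| ≤ π * (x - y) := hlipR y hy x hx h
        _ = π * |x - y| := by rw [abs_of_nonneg (sub_nonneg.mpr h)]
  -- extend f to a Lipschitz function on ℝ
  obtain ⟨F, hFlip, hFeq⟩ := hlip.extend_real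
  have h0I : (0:ℝ) ∈ Icc (0:ℝ) 1 := ⟨le_refl _, zero_le_one⟩
  have hgb : ∀ x : ℝ, |deriv F x| ≤ π := by
    intro x
    have := norm_deriv_le_of_lipschitz (𝕜 := ℝ) hFlip (x₀ := x)
    rwa [Real.norm_eq_abs, Real.coe_toNNReal π hpi] at this
  refine ⟨deriv F, ?_, ?_, ?_⟩
  · -- interval integrability
    have hmeas : Measurable (deriv F) := measurable_deriv F
    have hc : IntervalIntegrable (fun _ : ℝ => π) volume 0 1 := intervalIntegrable_const
    rw [intervalIntegrable_iff] at hc ⊢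
    exact hc.mono' hmeas.aestronglyMeasurable
      (Eventually.of_forall fun x => by simpa [Real.norm_eq_abs] using hgb x)
  · -- fundamental theorem of calculus
    intro t ht
    rw [hFeq ht, hFeq h0I]
    exact lipschitz_ftc hFlip t
  · -- a.e. derivative bound
    have h0 : ∀ᵐ x : ℝ ∂(volume : Measure ℝ), x ≠ 0 := by
      rw [ae_iff]
      simp only [ne_eq, not_not, setOf_eq_eq_singleton]
      exact Real.volume_singleton
    have h1 : ∀ᵐ x : ℝ ∂(volume : Measure ℝ), x ≠ 1 := by
      rw [ae_iff]
      simp only [ne_eq, not_not, setOf_eq_eq_singleton]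
      exact Real.volume_singleton
    filter_upwards [hFlip.ae_differentiableAt_real, h0, h1] with x hdx hx0 hx1 hxI
    have hxo : x ∈ Ioo (0:ℝ) 1 := ⟨lt_of_le_of_ne hxI.1 (Ne.symm hx0), lt_of_le_of_ne hxI.2 hx1⟩
    set d := deriv F x with hddef
    have hd : HasDerivAt F d x := hdx.hasDerivAt
    -- main estimate
    have main : ∀ ε : ℝ, 0 < ε →
        |d| ≤ π * Real.sqrt (1 - (max 0 (|f x| - ε)) ^ 2) + 2 * ε := by
      intro ε hε
      obtain ⟨hk0, h1k⟩ := hceil ε hε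
      have ho := (hasDerivAt_iff_isLittleO.mp hd).def hε
      obtain ⟨δ₁, hδ₁, H₁⟩ := Metric.eventually_nhds_iff.mp ho
      obtain ⟨δ₂, hδ₂, H₂⟩ := Metric.continuousWithinAt_iff.mp (hcont x hxI) ε hε
      set δ₀ := min (min δ₁ δ₂) (min x (1 - x)) with hδ₀def
      have hδ₀ : 0 < δ₀ :=
        lt_min (lt_min hδ₁ hδ₂) (lt_min hxo.1 (by linarith [hxo.2]))
      have hA : δ₀ ≤ δ₁ := (min_le_left _ _).trans (min_le_left _ _)
      have hB : δ₀ ≤ δ₂ := (min_le_left _ _).trans (min_le_right _ _)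
      have hC : δ₀ ≤ x := (min_le_right _ _).trans (min_le_left _ _)
      have hD : δ₀ ≤ 1 - x := (min_le_right _ _).trans (min_le_right _ _)
      set δ := δ₀ / 2 with hδdef
      have hδpos : 0 < δ := by positivity
      have hδlt : δ < δ₀ := by simp only [hδdef]; linarith
      obtain ⟨p, hp1, hp2⟩ := exists_rat_btwn (sub_lt_self x hδpos)
      obtain ⟨q, hq1, hq2⟩ := exists_rat_btwn (lt_add_of_pos_right x hδpos)
      have hpq : (p:ℝ) < q := by linarith
      have hqp : (0:ℝ) < (q:ℝ) - p := by linarith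
      have hpI : (p:ℝ) ∈ Icc (0:ℝ) 1 := ⟨by linarith, by linarith [hxo.2]⟩
      have hqI : (q:ℝ) ∈ Icc (0:ℝ) 1 := ⟨by linarith [hxo.1], by linarith⟩
      set m := sInf ((fun t => |f t|) '' Icc (p:ℝ) (q:ℝ)) with hmdef
      set M := max 0 (|f x| - ε) with hMdef
      have hm : M ≤ m := by
        apply le_csInf ((nonempty_Icc.mpr (le_of_lt hpq)).image _)
        rintro b ⟨s, hs, rfl⟩
        have hsI : s ∈ Icc (0:ℝ) 1 := ⟨by linarith [hs.1, hpI.1], by linarith [hs.2, hqI.2]⟩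
        have hds : dist s x < δ₂ := by
          rw [Real.dist_eq, abs_lt]
          constructor <;> [linarith [hs.1]; linarith [hs.2]]
        have h1 : |f s - f x| < ε := by
          have := H₂ hsI hds; rwa [Real.dist_eq] at this
        have h2 : |f x| - ε ≤ |f s| := by
          have h3 := abs_sub_abs_le_abs_sub (f x) (f s)
          rw [abs_sub_comm] at h1
          linarith
        exact max_le (abs_nonneg _) h2
      have hM0 : 0 ≤ M := le_max_left _ _
      have hsqrt : Real.sqrt (1 - m ^ 2) ≤ Real.sqrt (1 - M ^ 2) :=
        Real.sqrt_le_sqrt (by nlinarith)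
      have hquot : |f q - f p| / ((q:ℝ) - p) ≤ π * Real.sqrt (1 - M ^ 2) + ε := by
        have := hdq p q hpI hqI hpq _ hk0
        have h5 : π * Real.sqrt (1 - m ^ 2) ≤ π * Real.sqrt (1 - M ^ 2) :=
          mul_le_mul_of_nonneg_left hsqrt hpi
        linarith
      -- derivative estimate via straddle
      have hevq : |F (q:ℝ) - F x - ((q:ℝ) - x) * d| ≤ ε * |(q:ℝ) - x| := by
        have := H₁ (show dist ((q:ℝ)) x < δ₁ by rw [Real.dist_eq, abs_lt]; constructor <;> linarith)
        simpa [Real.norm_eq_abs, smul_eq_mul] using this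
      have hevp : |F (p:ℝ) - F x - ((p:ℝ) - x) * d| ≤ ε * |(p:ℝ) - x| := by
        have := H₁ (show dist ((p:ℝ)) x < δ₁ by rw [Real.dist_eq, abs_lt]; constructor <;> linarith)
        simpa [Real.norm_eq_abs, smul_eq_mul] using this
      have habsq : |(q:ℝ) - x| = (q:ℝ) - x := abs_of_pos (by linarith)
      have habsp : |(p:ℝ) - x| = x - (p:ℝ) := by
        rw [abs_of_neg (by linarith : (p:ℝ) - x < 0)]; ring
      have key2 : |d| * ((q:ℝ) - p) ≤ |F (q:ℝ) - F (p:ℝ)| + ε * ((q:ℝ) - p) := by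
        have hid : d * ((q:ℝ) - p) =
            (F (q:ℝ) - F (p:ℝ)) + (-(F (q:ℝ) - F x - ((q:ℝ) - x) * d))
              + (F (p:ℝ) - F x - ((p:ℝ) - x) * d) := by ring
        have h6 : |d * ((q:ℝ) - p)| ≤ |F (q:ℝ) - F (p:ℝ)|
            + |F (q:ℝ) - F x - ((q:ℝ) - x) * d| + |F (p:ℝ) - F x - ((p:ℝ) - x) * d| := by
          rw [hid]
          calc |(F (q:ℝ) - F (p:ℝ)) + (-(F (q:ℝ) - F x - ((q:ℝ) - x) * d))
              + (F (p:ℝ) - F x - ((p:ℝ) - x) * d)|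
              ≤ |F (q:ℝ) - F (p:ℝ)| + |(-(F (q:ℝ) - F x - ((q:ℝ) - x) * d))|
                + |F (p:ℝ) - F x - ((p:ℝ) - x) * d| := abs_add_three _ _ _
            _ = _ := by rw [abs_neg]
        rw [abs_mul, abs_of_pos hqp] at h6
        rw [habsq] at hevq
        rw [habsp] at hevp
        linarith
      have hFq : F (q:ℝ) = f (q:ℝ) := (hFeq hqI).symm
      have hFp : F (p:ℝ) = f (p:ℝ) := (hFeq hpI).symm
      rw [hFq, hFp] at key2
      have h7 : |f (q:ℝ) - f (p:ℝ)| ≤ (π * Real.sqrt (1 - M ^ 2) + ε) * ((q:ℝ) - p) := by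
        rw [div_le_iff₀ hqp] at hquot
        linarith
      have hexp : (π * Real.sqrt (1 - M ^ 2) + 2 * ε) * ((q:ℝ) - p)
          = (π * Real.sqrt (1 - M ^ 2) + ε) * ((q:ℝ) - p) + ε * ((q:ℝ) - p) := by ring
      have h8 : |d| * ((q:ℝ) - p) ≤ (π * Real.sqrt (1 - M ^ 2) + 2 * ε) * ((q:ℝ) - p) := by
        rw [hexp]; linarith
      exact le_of_mul_le_mul_right h8 hqp
    -- pass to the limit ε → 0⁺
    have cψ : Tendsto (fun ε : ℝ => π * Real.sqrt (1 - (max 0 (|f x| - ε)) ^ 2) + 2 * ε)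
        (𝓝[>] 0) (𝓝 (π * Real.sqrt (1 - f x ^ 2))) := by
      have hcontψ : Continuous fun ε : ℝ =>
          π * Real.sqrt (1 - (max 0 (|f x| - ε)) ^ 2) + 2 * ε := by
        apply Continuous.add
        · exact continuous_const.mul (Real.continuous_sqrt.comp
            (continuous_const.sub (((continuous_const.max
              (continuous_const.sub continuous_id))).pow 2)))
        · exact continuous_const.mul continuous_id
      have h9 := (hcontψ.tendsto 0).mono_left (nhdsWithin_le_nhds : 𝓝[>] (0:ℝ) ≤ 𝓝 0)
      have h10 : π * Real.sqrt (1 - (max 0 (|f x| - 0)) ^ 2) + 2 * 0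
          = π * Real.sqrt (1 - f x ^ 2) := by
        rw [sub_zero, max_eq_right (abs_nonneg (f x)), sq_abs]
        ring
      rwa [h10] at h9
    refine ge_of_tendsto cψ ?_
    filter_upwards [self_mem_nhdsWithin] with ε hε
    exact main ε hε
end

section
/- Let y : [0,1] → [-1,1] be absolutely continuous with |y'(t)| ≤ π√(1 - y(t)²) a.e., and suppose y(0) = 1. Then y(t) = cos(πt) for all t ∈ [0,1] such that y remains ≥ -1, provided additionally y(1) = -1. -/
open Real MeasureTheory Set Filter Topology

set_option maxHeartbeats 1000000

lemma core_arcsin_lip (f : ℝ → ℝ) (hf : Integrable f (volume : Measure ℝ))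
    (Y : ℝ → ℝ) (hYdef : ∀ u, Y u = 1 + ∫ r in (0:ℝ)..u, f r)
    (hYr : ∀ u ∈ Icc (0:ℝ) 1, |Y u| ≤ 1)
    (hb : ∀ᵐ r ∂(volume : Measure ℝ), r ∈ Icc (0:ℝ) 1 →
      |f r| ≤ π * Real.sqrt (1 - (Y r)^2))
    {c : ℝ} (hc : 1 < c) {s t : ℝ} (hs : 0 ≤ s) (hst : s ≤ t) (ht : t ≤ 1) :
    Real.arcsin (Y s / c) - Real.arcsin (Y t / c) ≤ π * (t - s) := by
  have hc0 : (0:ℝ) < c := by linarith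
  set c' : ℝ := (1 + c)/2 with hc'def
  have hc'1 : 1 ≤ c' := by simp only [hc'def]; linarith
  have hc'c : c' < c := by simp only [hc'def]; linarith
  have hc'0 : 0 < c' := by linarith
  set d : ℝ → ℝ := fun x => 1 / Real.sqrt (1 - (x/c)^2) * (1/c) with hd_def
  -- helper bounds for d
  have hsub : ∀ x : ℝ, |x| ≤ c' → (1:ℝ) - (c'/c)^2 ≤ 1 - (x/c)^2 := by
    intro x hx
    have h1 : x^2 ≤ c'^2 := by
      rw [← sq_abs x]; exact pow_le_pow_left₀ (abs_nonneg x) hx 2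
    have e1 : (x/c)^2 = x^2/c^2 := div_pow x c 2
    have e2 : (c'/c)^2 = c'^2/c^2 := div_pow c' c 2
    have h2 : x^2 / c^2 ≤ c'^2 / c^2 := by gcongr
    linarith [e1, e2, h2]
  have ha0 : 0 < 1 - (c'/c)^2 := by
    have h1 : c'/c < 1 := (div_lt_one hc0).2 hc'c
    have h2 : 0 ≤ c'/c := by positivity
    nlinarith
  set ρ : ℝ := Real.sqrt (1 - (c'/c)^2) with hρdef
  have hρ : 0 < ρ := Real.sqrt_pos.2 ha0
  set Lb : ℝ := 1/ρ * (1/c) with hLbdef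
  have hLb : 0 < Lb := by positivity
  have hd_nonneg : ∀ x, 0 ≤ d x := by
    intro x
    apply mul_nonneg (one_div_nonneg.2 (Real.sqrt_nonneg _)) (by positivity)
  have hd_le : ∀ x, |x| ≤ c' → d x ≤ Lb := by
    intro x hx
    have h2 : ρ ≤ Real.sqrt (1 - (x/c)^2) := Real.sqrt_le_sqrt (hsub x hx)
    have h3 : 1 / Real.sqrt (1 - (x/c)^2) ≤ 1/ρ := one_div_le_one_div_of_le hρ h2
    exact mul_le_mul_of_nonneg_right h3 (by positivity)
  have hd_cont : ∀ x : ℝ, (x/c)^2 < 1 → ContinuousAt d x := by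
    intro x hx
    have h1 : (0:ℝ) < 1 - (x/c)^2 := by linarith
    have h2 : ContinuousAt (fun x : ℝ => Real.sqrt (1 - (x/c)^2)) x :=
      (Real.continuous_sqrt.comp (by continuity)).continuousAt
    have h3 : Real.sqrt (1 - (x/c)^2) ≠ 0 := (Real.sqrt_pos.2 h1).ne'
    exact (continuousAt_const.div h2 h3).mul continuousAt_const
  have hd_key : ∀ x, |x| ≤ 1 → Real.sqrt (1 - x^2) * d x ≤ 1 := by
    intro x hx
    have hx2 : x^2 ≤ 1 := by
      rw [← sq_abs x]; nlinarith [abs_nonneg x]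
    have hA : (0:ℝ) < c^2 - x^2 := by nlinarith
    have hB : (0:ℝ) < 1 - (x/c)^2 := by
      rw [div_pow]
      have : x^2/c^2 < 1 := (div_lt_one (by positivity)).2 (by nlinarith)
      linarith
    have hcx : c * Real.sqrt (1 - (x/c)^2) = Real.sqrt (c^2 - x^2) := by
      rw [← Real.sqrt_sq hc0.le, ← Real.sqrt_mul (by positivity : (0:ℝ) ≤ c^2)]
      · congr 1; field_simp; rw [Real.sq_sqrt (sq_nonneg c)]
    have h3 : Real.sqrt (1-x^2) ≤ Real.sqrt (c^2 - x^2) := Real.sqrt_le_sqrt (by nlinarith)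
    have h4 : Real.sqrt (1-x^2) * d x = Real.sqrt (1-x^2) / Real.sqrt (c^2-x^2) := by
      rw [← hcx, hd_def]
      have h5 : Real.sqrt (1 - (x/c)^2) ≠ 0 := (Real.sqrt_pos.2 hB).ne'
      field_simp
    rw [h4]
    exact div_le_one_of_le₀ h3 (Real.sqrt_nonneg _)
  -- approximating sequence of continuous functions
  have hex : ∀ n : ℕ, ∃ k : ℝ → ℝ, Continuous k ∧ Integrable k volume ∧
      (∫ x, ‖f x - k x‖) ≤ (c - 1)/2 * (1/(n+1)) := by
    intro n
    obtain ⟨k, _, hk1, hk2, hk3⟩ := hf.exists_hasCompactSupport_integral_sub_le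
      (show (0:ℝ) < (c-1)/2 * (1/(n+1)) by
        have h9 : (0:ℝ) < c - 1 := by linarith
        positivity)
    exact ⟨k, hk2, hk3, hk1⟩
  choose k hk_cont hk_int hk_close using hex
  set ε : ℕ → ℝ := fun n => (c-1)/2 * (1/((n:ℝ)+1)) with hεdef
  have hε_le : ∀ n, ε n ≤ (c-1)/2 := by
    intro n
    have h1 : 1/((n:ℝ)+1) ≤ 1 := by
      rw [div_le_one (by positivity)]
      simp [Nat.one_le_cast]
    have h2 : (0:ℝ) < (c-1)/2 := by linarith
    calc ε n = (c-1)/2 * (1/((n:ℝ)+1)) := rfl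
      _ ≤ (c-1)/2 * 1 := by gcongr
      _ = (c-1)/2 := mul_one _
  have hε_to : Tendsto ε atTop (𝓝 0) := by
    have h1 := tendsto_one_div_add_atTop_nhds_zero_nat (𝕜 := ℝ)
    have h2 := h1.const_mul ((c-1)/2)
    simpa [hεdef] using h2
  set z : ℕ → ℝ → ℝ := fun n u => 1 + ∫ r in (0:ℝ)..u, k n r with hzdef
  have hz_deriv : ∀ n u, HasDerivAt (z n) (k n u) u := by
    intro n u
    have h1 := intervalIntegral.integral_hasDerivAt_right (a := (0:ℝ)) (b := u)
      ((hk_int n).intervalIntegrable) ((hk_cont n).stronglyMeasurableAtFilter _ _)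
      (hk_cont n).continuousAt
    exact h1.const_add 1
  have hz_close : ∀ n u, 0 ≤ u → u ≤ 1 → |z n u - Y u| ≤ ε n := by
    intro n u h0u h1u
    have hfi : IntervalIntegrable f volume 0 u := hf.intervalIntegrable
    have hki : IntervalIntegrable (k n) volume 0 u := (hk_int n).intervalIntegrable
    have h1 : z n u - Y u = ∫ r in (0:ℝ)..u, (k n r - f r) := by
      rw [hzdef, hYdef, intervalIntegral.integral_sub hki hfi]; ring
    rw [h1]
    calc |∫ r in (0:ℝ)..u, (k n r - f r)| ≤ ∫ r in (0:ℝ)..u, |k n r - f r| :=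
        intervalIntegral.abs_integral_le_integral_abs h0u
      _ = ∫ r in Ioc 0 u, |k n r - f r| := intervalIntegral.integral_of_le h0u
      _ ≤ ∫ r, |k n r - f r| :=
        setIntegral_le_integral ((hk_int n).sub hf).abs
          (Eventually.of_forall fun r => abs_nonneg _)
      _ = ∫ r, ‖f r - k n r‖ := by
        congr 1; funext r; rw [Real.norm_eq_abs, abs_sub_comm]
      _ ≤ ε n := hk_close n
  have hz_bnd : ∀ n u, 0 ≤ u → u ≤ 1 → |z n u| ≤ c' := by
    intro n u h0 h1
    have h2 := hz_close n u h0 h1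
    have h3 := hYr u ⟨h0, h1⟩
    have h4 := abs_add_le (z n u - Y u) (Y u)
    simp only [sub_add_cancel] at h4
    have h5 := hε_le n
    simp only [hc'def]
    linarith
  have hz_cont : ∀ n, Continuous (z n) := fun n =>
    continuous_iff_continuousAt.2 fun u => (hz_deriv n u).continuousAt
  have hY_cont : Continuous Y := by
    have h1 : Continuous (fun u => ∫ r in (0:ℝ)..u, f r) :=
      intervalIntegral.continuous_primitive (fun a b => hf.intervalIntegrable) 0
    have he : Y = fun u => 1 + ∫ r in (0:ℝ)..u, f r := funext hYdef
    rw [he]; exact continuous_const.add h1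
  have habs_lt : ∀ x : ℝ, |x| ≤ c' → (x / c)^2 < 1 := by
    intro x hx
    have h1 : |x / c| < 1 := by
      rw [abs_div, abs_of_pos hc0, div_lt_one hc0]
      linarith
    calc (x / c)^2 = |x / c|^2 := (sq_abs _).symm
      _ < 1 := by nlinarith [abs_nonneg (x / c)]
  have hz_in : ∀ n u, u ∈ uIcc s t → (z n u / c)^2 < 1 := by
    intro n u hu
    rw [uIcc_of_le hst] at hu
    exact habs_lt _ (hz_bnd n u (hs.trans hu.1) (hu.2.trans ht))
  have hY_in : ∀ u, 0 ≤ u → u ≤ 1 → (Y u / c)^2 < 1 := by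
    intro u h0 h1
    exact habs_lt _ ((hYr u ⟨h0, h1⟩).trans hc'1)
  have hFTC : ∀ n, Real.arcsin (z n t / c) - Real.arcsin (z n s / c)
      = ∫ r in s..t, k n r * d (z n r) := by
    intro n
    have hderiv : ∀ u ∈ uIcc s t,
        HasDerivAt (fun u => Real.arcsin (z n u / c)) (k n u * d (z n u)) u := by
      intro u hu
      have hin := hz_in n u hu
      have h1 : z n u / c ≠ -1 := by
        intro h; rw [h] at hin; norm_num at hin
      have h2 : z n u / c ≠ 1 := by
        intro h; rw [h] at hin; norm_num at hin
      have houter := Real.hasDerivAt_arcsin h1 h2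
      have hinner : HasDerivAt (fun u => z n u / c) (k n u / c) u :=
        (hz_deriv n u).div_const c
      have hcomp := houter.comp u hinner
      exact hcomp.congr_deriv (by simp only [hd_def]; ring)
    have hint : IntervalIntegrable (fun r => k n r * d (z n r)) volume s t := by
      apply ContinuousOn.intervalIntegrable
      apply ContinuousOn.mul (hk_cont n).continuousOn
      intro u hu
      exact ((hd_cont _ (hz_in n u hu)).comp (hz_deriv n u).continuousAt).continuousWithinAt
    exact (intervalIntegral.integral_eq_sub_of_hasDerivAt hderiv hint).symm
  have hz_tend : ∀ u, 0 ≤ u → u ≤ 1 → Tendsto (fun n => z n u) atTop (𝓝 (Y u)) := by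
    intro u h0 h1
    have h2 : Tendsto (fun n => z n u - Y u) atTop (𝓝 0) :=
      squeeze_zero_norm (fun n => by
        simpa [Real.norm_eq_abs] using hz_close n u h0 h1) hε_to
    have h3 := h2.add (tendsto_const_nhds (x := Y u))
    simpa using h3
  have hLHS : Tendsto (fun n => Real.arcsin (z n t / c) - Real.arcsin (z n s / c)) atTop
      (𝓝 (Real.arcsin (Y t / c) - Real.arcsin (Y s / c))) := by
    have harc : ∀ u, 0 ≤ u → u ≤ 1 →
        Tendsto (fun n => Real.arcsin (z n u / c)) atTop (𝓝 (Real.arcsin (Y u / c))) := by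
      intro u h0 h1
      have hcont : ContinuousAt (fun x : ℝ => Real.arcsin (x / c)) (Y u) :=
        Real.continuous_arcsin.continuousAt.comp (continuousAt_id.div_const c)
      exact hcont.tendsto.comp (hz_tend u h0 h1)
    exact (harc t (hs.trans hst) ht).sub (harc s hs (hst.trans ht))
  have hdY_cont : ContinuousOn (fun r => d (Y r)) (uIcc s t) := by
    intro u hu
    rw [uIcc_of_le hst] at hu
    exact ((hd_cont _ (hY_in u (hs.trans hu.1) (hu.2.trans ht))).comp
      hY_cont.continuousAt).continuousWithinAt
  have hJ_int : IntervalIntegrable (fun r => f r * d (Y r)) volume s t :=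
    hf.intervalIntegrable.mul_continuousOn hdY_cont
  set J : ℝ := ∫ r in s..t, f r * d (Y r) with hJdef
  have hdz_cont : ∀ n, ContinuousOn (fun r => d (z n r)) (uIcc s t) := by
    intro n u hu
    exact ((hd_cont _ (hz_in n u hu)).comp (hz_deriv n u).continuousAt).continuousWithinAt
  have hA_int : ∀ n, IntervalIntegrable (fun r => (k n r - f r) * d (z n r)) volume s t :=
    fun n => (((hk_int n).sub hf).intervalIntegrable).mul_continuousOn (hdz_cont n)
  have hB_int : ∀ n, IntervalIntegrable (fun r => f r * (d (z n r) - d (Y r))) volume s t :=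
    fun n => hf.intervalIntegrable.mul_continuousOn ((hdz_cont n).sub hdY_cont)
  have hsplit : ∀ n, (∫ r in s..t, k n r * d (z n r))
      = (∫ r in s..t, ((k n r - f r) * d (z n r) + f r * (d (z n r) - d (Y r)))) + J := by
    intro n
    rw [← intervalIntegral.integral_add ((hA_int n).add (hB_int n)) hJ_int]
    apply intervalIntegral.integral_congr
    intro r _
    ring
  have hAB : ∀ n, (∫ r in s..t, ((k n r - f r) * d (z n r) + f r * (d (z n r) - d (Y r))))
      = (∫ r in s..t, (k n r - f r) * d (z n r)) + ∫ r in s..t, f r * (d (z n r) - d (Y r)) :=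
    fun n => intervalIntegral.integral_add (hA_int n) (hB_int n)
  have hkf_int : ∀ n, Integrable (fun r => |k n r - f r|) volume :=
    fun n => ((hk_int n).sub hf).abs
  have hkf_small : ∀ n, (∫ r in s..t, |k n r - f r|) ≤ ε n := by
    intro n
    calc (∫ r in s..t, |k n r - f r|) = ∫ r in Ioc s t, |k n r - f r| :=
        intervalIntegral.integral_of_le hst
      _ ≤ ∫ r, |k n r - f r| :=
        setIntegral_le_integral (hkf_int n) (Eventually.of_forall fun r => abs_nonneg _)
      _ = ∫ r, ‖f r - k n r‖ := by
        congr 1; funext r; rw [Real.norm_eq_abs, abs_sub_comm]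
      _ ≤ ε n := hk_close n
  have hA_tend : Tendsto (fun n => ∫ r in s..t, (k n r - f r) * d (z n r)) atTop (𝓝 0) := by
    apply squeeze_zero_norm (a := fun n => ε n * Lb)
    · intro n
      have h1 : |∫ r in s..t, (k n r - f r) * d (z n r)|
          ≤ ∫ r in s..t, |(k n r - f r) * d (z n r)| :=
        intervalIntegral.abs_integral_le_integral_abs hst
      have h2 : (∫ r in s..t, |(k n r - f r) * d (z n r)|)
          ≤ ∫ r in s..t, |k n r - f r| * Lb := by
        apply intervalIntegral.integral_mono_on hst (hA_int n).abs
          ((hkf_int n).intervalIntegrable.mul_const Lb)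
        intro r hr
        have hbz := hd_le _ (hz_bnd n r (hs.trans hr.1) (hr.2.trans ht))
        rw [abs_mul, abs_of_nonneg (hd_nonneg _)]
        exact mul_le_mul_of_nonneg_left hbz (abs_nonneg _)
      have h3 : (∫ r in s..t, |k n r - f r| * Lb) = (∫ r in s..t, |k n r - f r|) * Lb :=
        intervalIntegral.integral_mul_const _ _
      have h4 := hkf_small n
      have h5 : (∫ r in s..t, |k n r - f r|) * Lb ≤ ε n * Lb :=
        mul_le_mul_of_nonneg_right h4 hLb.le
      rw [Real.norm_eq_abs]
      linarith
    · simpa [hεdef, one_div] using hε_to.mul_const Lb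
  have hB_tend : Tendsto (fun n => ∫ r in s..t, f r * (d (z n r) - d (Y r))) atTop (𝓝 0) := by
    have h0 : ∀ n, (∫ r in s..t, f r * (d (z n r) - d (Y r)))
        = ∫ r in Ioc s t, f r * (d (z n r) - d (Y r)) :=
      fun n => intervalIntegral.integral_of_le hst
    simp only [h0]
    have hd_meas : Measurable d := by
      rw [hd_def]
      fun_prop
    have hmeas : ∀ n, AEStronglyMeasurable (fun r => f r * (d (z n r) - d (Y r)))
        (volume.restrict (Ioc s t)) := by
      intro n
      apply AEStronglyMeasurable.mul (hf.aestronglyMeasurable.restrict)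
      exact (((hd_meas.comp (hz_cont n).measurable).sub
        (hd_meas.comp hY_cont.measurable)).aestronglyMeasurable).restrict
    have hbint : Integrable (fun r => |f r| * (2 * Lb)) (volume.restrict (Ioc s t)) :=
      (hf.abs.mul_const _).restrict
    have hbnd : ∀ n, ∀ᵐ r ∂(volume.restrict (Ioc s t)),
        ‖f r * (d (z n r) - d (Y r))‖ ≤ |f r| * (2 * Lb) := by
      intro n
      filter_upwards [ae_restrict_mem measurableSet_Ioc] with r hr
      have h0r : 0 ≤ r := hs.trans hr.1.le
      have h1r : r ≤ 1 := hr.2.trans ht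
      have hbz := hd_le _ (hz_bnd n r h0r h1r)
      have hbY := hd_le _ ((hYr r ⟨h0r, h1r⟩).trans hc'1)
      rw [Real.norm_eq_abs, abs_mul]
      apply mul_le_mul_of_nonneg_left _ (abs_nonneg _)
      have h5 : |d (z n r) - d (Y r)| ≤ |d (z n r)| + |d (Y r)| := abs_sub _ _
      rw [abs_of_nonneg (hd_nonneg _), abs_of_nonneg (hd_nonneg _)] at h5
      linarith
    have hlim : ∀ᵐ r ∂(volume.restrict (Ioc s t)),
        Tendsto (fun n => f r * (d (z n r) - d (Y r))) atTop (𝓝 0) := by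
      filter_upwards [ae_restrict_mem measurableSet_Ioc] with r hr
      have h0r : 0 ≤ r := hs.trans hr.1.le
      have h1r : r ≤ 1 := hr.2.trans ht
      have h1 : Tendsto (fun n => d (z n r)) atTop (𝓝 (d (Y r))) :=
        ((hd_cont _ (hY_in r h0r h1r)).tendsto).comp (hz_tend r h0r h1r)
      have h2 := (h1.sub (tendsto_const_nhds (x := d (Y r)))).const_mul (f r)
      simpa using h2
    have := tendsto_integral_of_dominated_convergence (fun r => |f r| * (2 * Lb))
      hmeas hbint hbnd hlim
    simpa using this
  have hRHS : Tendsto (fun n => ∫ r in s..t, k n r * d (z n r)) atTop (𝓝 J) := by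
    have h := (hA_tend.add hB_tend).add (tendsto_const_nhds (x := J))
    simp only [add_zero, zero_add] at h
    apply h.congr
    intro n
    rw [hsplit n, hAB n]
  have hFTC' : Tendsto (fun n => ∫ r in s..t, k n r * d (z n r)) atTop
      (𝓝 (Real.arcsin (Y t / c) - Real.arcsin (Y s / c))) := by
    apply hLHS.congr
    intro n
    exact hFTC n
  have hkey : Real.arcsin (Y t / c) - Real.arcsin (Y s / c) = J :=
    tendsto_nhds_unique hFTC' hRHS
  have hπ : |J| ≤ π * (t - s) := by
    have h1 : |J| ≤ ∫ r in s..t, |f r * d (Y r)| :=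
      intervalIntegral.abs_integral_le_integral_abs hst
    have h2 : (∫ r in s..t, |f r * d (Y r)|) ≤ ∫ r in s..t, π := by
      apply intervalIntegral.integral_mono_ae_restrict hst hJ_int.abs intervalIntegrable_const
      filter_upwards [ae_restrict_of_ae hb, ae_restrict_mem measurableSet_Icc] with r hr1 hr2
      have hr01 : r ∈ Icc (0:ℝ) 1 := ⟨hs.trans hr2.1, hr2.2.trans ht⟩
      have hb1 := hr1 hr01
      have hY1 := hYr r hr01
      calc |f r * d (Y r)| = |f r| * d (Y r) := by
            rw [abs_mul, abs_of_nonneg (hd_nonneg _)]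
        _ ≤ (π * Real.sqrt (1 - Y r ^ 2)) * d (Y r) :=
            mul_le_mul_of_nonneg_right hb1 (hd_nonneg _)
        _ = π * (Real.sqrt (1 - Y r ^ 2) * d (Y r)) := by ring
        _ ≤ π * 1 := mul_le_mul_of_nonneg_left (hd_key _ hY1) pi_pos.le
        _ = π := mul_one π
    have h3 : (∫ r in s..t, (π:ℝ)) = π * (t - s) := by
      rw [intervalIntegral.integral_const, smul_eq_mul]; ring
    linarith
  have hneg : Real.arcsin (Y s / c) - Real.arcsin (Y t / c) = -J := by
    rw [← hkey]; ring
  rw [hneg]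
  calc -J ≤ |J| := neg_le_abs J
    _ ≤ π * (t - s) := hπ

theorem stmt_15 (y g : ℝ → ℝ)
    (hrange : ∀ t ∈ Icc (0:ℝ) 1, y t ∈ Icc (-1:ℝ) 1)
    (hint : IntervalIntegrable g volume 0 1)
    (hAC : ∀ t ∈ Icc (0:ℝ) 1, y t = y 0 + ∫ s in (0:ℝ)..t, g s)
    (hbound : ∀ᵐ t ∂(volume : Measure ℝ), t ∈ Icc (0:ℝ) 1 →
      |g t| ≤ π * Real.sqrt (1 - (y t) ^ 2))
    (h0 : y 0 = 1) (h1 : y 1 = -1) :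
    ∀ t ∈ Icc (0:ℝ) 1, y t = Real.cos (π * t) := by
  intro t ht
  set f : ℝ → ℝ := (Ioc (0:ℝ) 1).indicator g with hfdef
  have hgi : IntegrableOn g (Ioc 0 1) volume := hint.1
  have hf : Integrable f volume := by
    rw [hfdef, integrable_indicator_iff measurableSet_Ioc]; exact hgi
  have hfg : ∀ u, 0 ≤ u → u ≤ 1 → (∫ r in (0:ℝ)..u, f r) = ∫ r in (0:ℝ)..u, g r := by
    intro u hu0 hu1
    rw [intervalIntegral.integral_of_le hu0, intervalIntegral.integral_of_le hu0, hfdef,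
      setIntegral_indicator measurableSet_Ioc]
    congr 1
    rw [Ioc_inter_Ioc]
    simp [min_eq_left hu1]
  set Y : ℝ → ℝ := fun u => 1 + ∫ r in (0:ℝ)..u, f r with hYdef
  have hYy : ∀ u, u ∈ Icc (0:ℝ) 1 → Y u = y u := by
    intro u hu
    have : Y u = 1 + ∫ r in (0:ℝ)..u, f r := rfl
    rw [this, hAC u hu, h0, hfg u hu.1 hu.2]
  have hYr : ∀ u ∈ Icc (0:ℝ) 1, |Y u| ≤ 1 := by
    intro u hu
    rw [hYy u hu]
    have h2 := hrange u hu
    rw [abs_le]; exact ⟨h2.1, h2.2⟩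
  have hbY : ∀ᵐ r ∂(volume : Measure ℝ), r ∈ Icc (0:ℝ) 1 →
      |f r| ≤ π * Real.sqrt (1 - (Y r)^2) := by
    filter_upwards [hbound] with r hr hri
    rw [hYy r hri]
    by_cases hmem : r ∈ Ioc (0:ℝ) 1
    · rw [hfdef, indicator_of_mem hmem]; exact hr hri
    · rw [hfdef, indicator_of_notMem hmem]
      simp only [abs_zero]
      positivity
  have hM : ∀ u v : ℝ, 0 ≤ u → u ≤ v → v ≤ 1 →
      Real.arcsin (Y u) - Real.arcsin (Y v) ≤ π * (v - u) := by
    intro u v hu0 huv hv1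
    have hseq : ∀ n : ℕ, Real.arcsin (Y u / (1 + 1/((n:ℝ)+1)))
        - Real.arcsin (Y v / (1 + 1/((n:ℝ)+1))) ≤ π * (v - u) := by
      intro n
      have hc : (1:ℝ) < 1 + 1/((n:ℝ)+1) := by
        have h2 : (0:ℝ) < 1/((n:ℝ)+1) := by positivity
        linarith
      exact core_arcsin_lip f hf Y (fun _ => rfl) hYr hbY hc hu0 huv hv1
    have hc_to : Tendsto (fun n : ℕ => 1 + 1/((n:ℝ)+1)) atTop (𝓝 1) := by
      have h2 := tendsto_one_div_add_atTop_nhds_zero_nat (𝕜 := ℝ)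
      have h3 : Tendsto (fun _ : ℕ => (1:ℝ)) atTop (𝓝 1) := tendsto_const_nhds
      simpa using h3.add h2
    have harcs : ∀ w : ℝ, Tendsto (fun n : ℕ => Real.arcsin (w / (1 + 1/((n:ℝ)+1)))) atTop
        (𝓝 (Real.arcsin w)) := by
      intro w
      have hcont : ContinuousAt (fun x : ℝ => Real.arcsin (w / x)) 1 := by
        apply Real.continuous_arcsin.continuousAt.comp
        exact continuousAt_const.div continuousAt_id one_ne_zero
      have h4 := hcont.tendsto.comp hc_to
      simpa [Function.comp_def] using h4
    exact le_of_tendsto ((harcs (Y u)).sub (harcs (Y v))) (Eventually.of_forall hseq)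
  have hY0 : Y 0 = 1 := by
    have : Y 0 = 1 + ∫ r in (0:ℝ)..(0:ℝ), f r := rfl
    rw [this, intervalIntegral.integral_same]; ring
  have hY1 : Y 1 = -1 := by rw [hYy 1 ⟨zero_le_one, le_refl 1⟩, h1]
  have hA := hM 0 t le_rfl ht.1 ht.2
  have hB := hM t 1 ht.1 ht.2 le_rfl
  rw [hY0, Real.arcsin_one, hYy t ht] at hA
  rw [hY1, Real.arcsin_neg_one, hYy t ht] at hB
  rw [sub_zero] at hA
  rw [mul_sub, mul_one] at hB
  have hyr := hrange t ht
  have harc : Real.arcsin (y t) = π/2 - π * t := by linarith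
  have hsin := Real.sin_arcsin hyr.1 hyr.2
  rw [harc] at hsin
  rw [← hsin, Real.sin_pi_div_two_sub]
end

section
/- Let f : [0,1] → ℝ satisfy |f(t) - f(s)| ≤ √8·|t-s|^{1/2} + ε_n for all s,t, with ε_n → 0, and let f_m be the piecewise-linear interpolation of f at points i/m. Then there exist sequences m(n) → ∞ and c_n → 0 such that f_{m(n)} is Hölder-1/2 with constant √8 + δ for any fixed δ > 0 and large n, and ‖f - f_{m(n)}‖_∞ ≤ c_n. -/
open Real Filter Set

/-- The piecewise-linear interpolation of `f` at the points `i/m`, `i = 0, …, m`. -/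
noncomputable def linInterp (f : ℝ → ℝ) (m : ℕ) : ℝ → ℝ := fun t =>
  f ((⌊t * m⌋₊ : ℝ) / m) +
    (t * m - ⌊t * m⌋₊) * (f (((⌊t * m⌋₊ : ℝ) + 1) / m) - f ((⌊t * m⌋₊ : ℝ) / m))

lemma linInterp_rep (f : ℝ → ℝ) {m : ℕ} (hm : 1 ≤ m) {t : ℝ} (ht : t ∈ Icc (0:ℝ) 1) :
    ∃ i : ℕ, ∃ α : ℝ, i + 1 ≤ m ∧ 0 ≤ α ∧ α ≤ 1 ∧ t = ((i:ℝ) + α) / m ∧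
      linInterp f m t = (1 - α) * f ((i:ℝ) / m) + α * f (((i:ℝ) + 1) / m) := by
  have hm0 : (0:ℝ) < m := by exact_mod_cast hm
  rcases lt_or_eq_of_le ht.2 with h1 | h1
  · refine ⟨⌊t * m⌋₊, t * m - ⌊t * m⌋₊, ?_, ?_, ?_, ?_, ?_⟩
    · have : t * m < m := by
        calc t * m < 1 * m := by exact mul_lt_mul_of_pos_right h1 hm0
        _ = m := one_mul _
      have := (Nat.floor_lt (mul_nonneg ht.1 hm0.le)).mpr (by exact_mod_cast this)
      omega
    · have := Nat.floor_le (mul_nonneg ht.1 hm0.le)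
      linarith
    · have := Nat.lt_floor_add_one (t * m)
      linarith
    · field_simp; ring
    · simp only [linInterp]; ring
  · subst h1
    have hc : ((m - 1 : ℕ) : ℝ) = (m:ℝ) - 1 := by push_cast [Nat.cast_sub hm]; ring
    have hfl : ⌊(1:ℝ) * (m:ℝ)⌋₊ = m := by rw [one_mul, Nat.floor_natCast]
    have hdm : (m:ℝ)/m = 1 := div_self hm0.ne'
    refine ⟨m - 1, 1, by omega, zero_le_one, le_refl 1, ?_, ?_⟩
    · rw [hc]; field_simp; ring
    · simp only [linInterp, hfl, hc]
      rw [show ((m:ℝ) - 1 + 1) = (m:ℝ) by ring, hdm]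
      ring

lemma keyA {K e d : ℝ} (hK : 0 ≤ K) (he : 0 ≤ e) (hd0 : 0 ≤ d) (hd1 : d ≤ 1) :
    d * (K + e) ≤ (K + Real.sqrt 2 * e) * Real.sqrt d := by
  have hu0 : 0 ≤ sqrt d := sqrt_nonneg d
  have hu2 : sqrt d ^ 2 = d := sq_sqrt hd0
  have hu1 : sqrt d ≤ 1 := by
    rw [show (1:ℝ) = sqrt 1 by simp]; exact sqrt_le_sqrt hd1
  have hs2 : (1:ℝ) ≤ sqrt 2 := by
    rw [show (1:ℝ) = sqrt 1 by simp]; exact sqrt_le_sqrt (by norm_num)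
  nlinarith [mul_nonneg hK (mul_nonneg hu0 (sub_nonneg.mpr hu1)),
    mul_nonneg he (mul_nonneg hu0 (sub_nonneg.mpr hu1)),
    mul_nonneg (mul_nonneg he hu0) (sub_nonneg.mpr hs2)]

lemma keyB {K e x y : ℝ} (hK : 0 ≤ K) (he : 0 ≤ e) (hx : 0 ≤ x) (hxy : x ≤ y) (hy : y ≤ 1) :
    x * (K * Real.sqrt 2 + e) + (y - x) * (K + e) ≤ (K + Real.sqrt 2 * e) * Real.sqrt (x + y) := by
  have hs0 : (0:ℝ) ≤ sqrt 2 := sqrt_nonneg 2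
  have hs2 : sqrt 2 ^ 2 = 2 := sq_sqrt (by norm_num)
  have hs1 : (1:ℝ) ≤ sqrt 2 := by
    rw [show (1:ℝ) = sqrt 1 by simp]; exact sqrt_le_sqrt (by norm_num)
  have hu0 : 0 ≤ sqrt (x + y) := sqrt_nonneg _
  have hu2 : sqrt (x + y) ^ 2 = x + y := sq_sqrt (by linarith)
  have hL0 : 0 ≤ x * sqrt 2 + (y - x) := by nlinarith
  have hL : x * sqrt 2 + (y - x) ≤ sqrt (x + y) := by
    have hsq : (x * sqrt 2 + (y - x)) ^ 2 ≤ x + y := by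
      nlinarith [mul_nonneg hx (sub_nonneg.mpr hy),
        mul_nonneg (sub_nonneg.mpr hs1) (mul_nonneg hx (sub_nonneg.mpr hy)),
        mul_nonneg hx (sub_nonneg.mpr (show x ≤ 1 by linarith)),
        sq_nonneg (sqrt 2 - 3/2), mul_nonneg hx hx,
        mul_nonneg (mul_nonneg hx hx) hs0]
    calc x * sqrt 2 + (y - x) = sqrt ((x * sqrt 2 + (y - x)) ^ 2) := (sqrt_sq hL0).symm
      _ ≤ sqrt (x + y) := sqrt_le_sqrt hsq
  have hP2 : y ≤ sqrt 2 * sqrt (x + y) := by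
    have hu1 : sqrt (x + y) ≤ sqrt 2 := sqrt_le_sqrt (by linarith)
    nlinarith
  nlinarith [mul_le_mul_of_nonneg_left hL hK, mul_le_mul_of_nonneg_left hP2 he]

lemma e_le_sev {e s v : ℝ} (he : 0 ≤ e) (hs1 : 1 ≤ s) (hv1 : 1 ≤ v) : e ≤ s * e * v := by
  nlinarith [mul_nonneg he (sub_nonneg.mpr hv1), mul_nonneg (mul_nonneg (sub_nonneg.mpr hs1) he) (le_trans zero_le_one hv1)]

lemma le_of_sq_le' {L v : ℝ} (hL : 0 ≤ L) (hv : 0 ≤ v) (h : L ^ 2 ≤ v ^ 2) : L ≤ v := by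
  nlinarith

lemma keyC' {K e a b g x y z v s : ℝ} (hK : 0 ≤ K) (he : 0 ≤ e) (ha0 : 0 ≤ a) (ha1 : a ≤ 1)
    (hb0 : 0 ≤ b) (hb1 : b ≤ 1) (hg : 2 ≤ g)
    (hx0 : 0 ≤ x) (hx2 : x ^ 2 = g - 1) (hy0 : 0 ≤ y) (hy2 : y ^ 2 = g)
    (hz0 : 0 ≤ z) (hz2 : z ^ 2 = g + 1) (hv1 : 1 ≤ v) (hv2 : v ^ 2 = g + b - a)
    (hs1 : 1 ≤ s) :
    ((1-a)*(1-b)+a*b) * (K * y + e) + a*(1-b) * (K * x + e)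
      + (1-a)*b * (K * z + e) ≤ (K + s * e) * v := by
  have hw1 : 0 ≤ a*(1-b) := mul_nonneg ha0 (by linarith)
  have hw2 : 0 ≤ (1-a)*(1-b)+a*b := by nlinarith
  have hw3 : 0 ≤ (1-a)*b := mul_nonneg (by linarith) hb0
  have hv0 : (0:ℝ) ≤ v := by linarith
  have hL0 : 0 ≤ a*(1-b)*x + ((1-a)*(1-b)+a*b)*y + (1-a)*b*z := by
    have h1 := mul_nonneg hw1 hx0
    have h2 := mul_nonneg hw2 hy0
    have h3 := mul_nonneg hw3 hz0
    linarith
  have heq : g + b - a - (a*(1-b)*x + ((1-a)*(1-b)+a*b)*y + (1-a)*b*z) ^ 2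
      = (a*(1-b))*((1-a)*(1-b)+a*b)*(x-y)^2
      + (a*(1-b))*((1-a)*b)*(x-z)^2 + ((1-a)*(1-b)+a*b)*((1-a)*b)*(y-z)^2 := by
    linear_combination (-(a*(1-b))) * hx2 + (-((1-a)*(1-b)+a*b)) * hy2 + (-((1-a)*b)) * hz2
  have hLsq : (a*(1-b)*x + ((1-a)*(1-b)+a*b)*y + (1-a)*b*z) ^ 2 ≤ g + b - a := by
    have h12 := mul_nonneg (mul_nonneg hw1 hw2) (sq_nonneg (x - y))
    have h13 := mul_nonneg (mul_nonneg hw1 hw3) (sq_nonneg (x - z))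
    have h23 := mul_nonneg (mul_nonneg hw2 hw3) (sq_nonneg (y - z))
    linarith
  have hLv : a*(1-b)*x + ((1-a)*(1-b)+a*b)*y + (1-a)*b*z ≤ v :=
    le_of_sq_le' hL0 hv0 (by rw [hv2]; exact hLsq)
  have hKL := mul_le_mul_of_nonneg_left hLv hK
  have he2 : e ≤ s * e * v := e_le_sev he hs1 hv1
  calc ((1-a)*(1-b)+a*b) * (K * y + e) + a*(1-b) * (K * x + e) + (1-a)*b * (K * z + e)
      = K * (a*(1-b)*x + ((1-a)*(1-b)+a*b)*y + (1-a)*b*z) + e := by ring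
    _ ≤ K * v + s * e * v := by linarith
    _ = (K + s * e) * v := by ring

lemma abs4 (a b c d : ℝ) : |a + b + c + d| ≤ |a| + |b| + |c| + |d| := by
  calc |a + b + c + d| ≤ |a + b + c| + |d| := abs_add_le _ _
    _ ≤ |a + b| + |c| + |d| := by have := abs_add_le (a+b) c; linarith
    _ ≤ |a| + |b| + |c| + |d| := by have := abs_add_le a b; linarith

lemma master (f : ℝ → ℝ) {ε : ℝ} (hε : 0 ≤ ε) {m : ℕ} (hm : 1 ≤ m)
    (hf : ∀ s ∈ Icc (0:ℝ) 1, ∀ t ∈ Icc (0:ℝ) 1, |f t - f s| ≤ sqrt 8 * sqrt |t - s| + ε)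
    {s t : ℝ} (hs : s ∈ Icc (0:ℝ) 1) (ht : t ∈ Icc (0:ℝ) 1) (hst : s ≤ t) :
    |linInterp f m t - linInterp f m s| ≤
      (sqrt 8 + sqrt 2 * ε * sqrt m) * sqrt (t - s) := by
  have hm0 : (0:ℝ) < m := by exact_mod_cast hm
  have hsm0 : (0:ℝ) < sqrt m := sqrt_pos.mpr hm0
  have hsm1 : (1:ℝ) ≤ sqrt m := by
    rw [show (1:ℝ) = sqrt 1 by simp]; exact sqrt_le_sqrt (by exact_mod_cast hm)
  have hs21 : (1:ℝ) ≤ sqrt 2 := by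
    rw [show (1:ℝ) = sqrt 1 by simp]; exact sqrt_le_sqrt (by norm_num)
  have hK0 : (0:ℝ) ≤ sqrt 8 / sqrt m := by positivity
  rcases eq_or_lt_of_le hst with rfl | hlt
  · simp
  obtain ⟨i, α, him, hα0, hα1, hsv, hsr⟩ := linInterp_rep f hm hs
  obtain ⟨j, β, hjm, hβ0, hβ1, htv, htr⟩ := linInterp_rep f hm ht
  have hGm : ((i:ℝ) + α) < (j:ℝ) + β := by
    have h := hlt
    rw [hsv, htv] at h
    have h2 := (div_lt_div_iff₀ hm0 hm0).mp h
    exact lt_of_mul_lt_mul_right h2 hm0.le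
  have hij : i ≤ j := by
    have h1 : (i:ℝ) < (j:ℝ) + 1 := by linarith
    have : i < j + 1 := by exact_mod_cast h1
    omega
  have hts : t - s = ((j:ℝ) + β - ((i:ℝ) + α)) / m := by rw [hsv, htv]; ring
  have hG0 : 0 ≤ (j:ℝ) + β - ((i:ℝ) + α) := by linarith
  have hRHS : (sqrt 8 + sqrt 2 * ε * sqrt m) * sqrt (t - s)
      = (sqrt 8 / sqrt m + sqrt 2 * ε) * sqrt ((j:ℝ) + β - ((i:ℝ) + α)) := by
    rw [hts, sqrt_div hG0]
    field_simp
  rw [hRHS]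
  have hmem : ∀ a : ℕ, a ≤ m → ((a:ℝ)/m) ∈ Icc (0:ℝ) 1 := by
    intro a ha
    constructor
    · positivity
    · rw [div_le_one hm0]; exact_mod_cast ha
  have hgb : ∀ a c : ℕ, a ≤ c → c ≤ m →
      |f ((c:ℝ)/m) - f ((a:ℝ)/m)| ≤ (sqrt 8 / sqrt m) * sqrt ((c:ℝ) - a) + ε := by
    intro a c hac hcm
    have h := hf _ (hmem a (le_trans hac hcm)) _ (hmem c hcm)
    have hd : (c:ℝ)/m - (a:ℝ)/m = ((c:ℝ) - a)/m := by ring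
    have hca : (0:ℝ) ≤ (c:ℝ) - a := by
      have : (a:ℝ) ≤ c := by exact_mod_cast hac
      linarith
    rw [hd, abs_of_nonneg (div_nonneg hca hm0.le), sqrt_div hca] at h
    calc |f ((c:ℝ)/m) - f ((a:ℝ)/m)| ≤ sqrt 8 * (sqrt ((c:ℝ)-a) / sqrt m) + ε := h
      _ = (sqrt 8 / sqrt m) * sqrt ((c:ℝ) - a) + ε := by ring
  by_cases hji : j = i
  · subst hji
    have hβα : α < β := by linarith
    have hD : linInterp f m t - linInterp f m s
        = (β - α) * (f (((j:ℝ)+1)/m) - f ((j:ℝ)/m)) := by rw [htr, hsr]; ring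
    have hb := hgb j (j+1) (by omega) him
    push_cast at hb
    rw [show ((j:ℝ)+1) - j = 1 by ring, sqrt_one, mul_one] at hb
    have harg : (j:ℝ) + β - ((j:ℝ) + α) = β - α := by ring
    rw [harg]
    calc |linInterp f m t - linInterp f m s|
        = (β - α) * |f (((j:ℝ)+1)/m) - f ((j:ℝ)/m)| := by
          rw [hD, abs_mul, abs_of_nonneg (by linarith : (0:ℝ) ≤ β - α)]
      _ ≤ (β - α) * (sqrt 8 / sqrt m + ε) :=
          mul_le_mul_of_nonneg_left hb (by linarith)
      _ ≤ (sqrt 8 / sqrt m + sqrt 2 * ε) * sqrt (β - α) :=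
          keyA hK0 hε (by linarith) (by linarith)
  by_cases hji2 : j = i + 1
  · subst hji2
    push_cast at htr htv hjm hGm hG0 ⊢
    rw [show ((i:ℝ)+1+1) = (i:ℝ)+2 from by ring] at htr
    have hb1 := hgb i (i+1) (by omega) (by omega)
    have hb2 := hgb (i+1) (i+2) (by omega) (by omega)
    have hb3 := hgb i (i+2) (by omega) (by omega)
    push_cast at hb1 hb2 hb3
    rw [show ((i:ℝ)+1) - i = 1 by ring, sqrt_one, mul_one] at hb1
    rw [show ((i:ℝ)+2) - ((i:ℝ)+1) = 1 by ring, sqrt_one, mul_one] at hb2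
    rw [show ((i:ℝ)+2) - (i:ℝ) = 2 by ring] at hb3
    have harg : (i:ℝ) + 1 + β - ((i:ℝ) + α) = (1 - α) + β := by ring
    rcases le_total (1-α) β with hAB | hAB
    · have hD : linInterp f m t - linInterp f m s
          = (1-α) * (f (((i:ℝ)+2)/m) - f ((i:ℝ)/m))
            + (β - (1-α)) * (f (((i:ℝ)+2)/m) - f (((i:ℝ)+1)/m)) := by rw [htr, hsr]; ring
      rw [harg]
      calc |linInterp f m t - linInterp f m s|
          ≤ (1-α) * |f (((i:ℝ)+2)/m) - f ((i:ℝ)/m)|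
            + (β - (1-α)) * |f (((i:ℝ)+2)/m) - f (((i:ℝ)+1)/m)| := by
            rw [hD]
            refine (abs_add_le _ _).trans ?_
            rw [abs_mul, abs_mul, abs_of_nonneg (by linarith : (0:ℝ) ≤ 1 - α),
              abs_of_nonneg (by linarith : (0:ℝ) ≤ β - (1-α))]
        _ ≤ (1-α) * ((sqrt 8 / sqrt m) * sqrt 2 + ε)
            + (β - (1-α)) * (sqrt 8 / sqrt m + ε) := by
            exact add_le_add (mul_le_mul_of_nonneg_left hb3 (by linarith))
              (mul_le_mul_of_nonneg_left hb2 (by linarith))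
        _ ≤ (sqrt 8 / sqrt m + sqrt 2 * ε) * sqrt ((1-α) + β) :=
            keyB hK0 hε (by linarith) hAB hβ1
    · have hD : linInterp f m t - linInterp f m s
          = β * (f (((i:ℝ)+2)/m) - f ((i:ℝ)/m))
            + ((1-α) - β) * (f (((i:ℝ)+1)/m) - f ((i:ℝ)/m)) := by rw [htr, hsr]; ring
      rw [harg, show ((1:ℝ)-α) + β = β + (1-α) from by ring]
      calc |linInterp f m t - linInterp f m s|
          ≤ β * |f (((i:ℝ)+2)/m) - f ((i:ℝ)/m)|
            + ((1-α) - β) * |f (((i:ℝ)+1)/m) - f ((i:ℝ)/m)| := by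
            rw [hD]
            refine (abs_add_le _ _).trans ?_
            rw [abs_mul, abs_mul, abs_of_nonneg hβ0,
              abs_of_nonneg (by linarith : (0:ℝ) ≤ (1-α) - β)]
        _ ≤ β * ((sqrt 8 / sqrt m) * sqrt 2 + ε)
            + ((1-α) - β) * (sqrt 8 / sqrt m + ε) :=
            add_le_add (mul_le_mul_of_nonneg_left hb3 hβ0)
              (mul_le_mul_of_nonneg_left hb1 (by linarith))
        _ ≤ (sqrt 8 / sqrt m + sqrt 2 * ε) * sqrt (β + (1-α)) :=
            keyB hK0 hε hβ0 hAB (by linarith)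
  -- far case
  have hij2 : i + 2 ≤ j := by omega
  have hg2 : (2:ℝ) ≤ (j:ℝ) - i := by
    have : (i:ℝ) + 2 ≤ j := by exact_mod_cast hij2
    linarith
  have hb00 := hgb i j hij (by omega)
  have hb10 := hgb (i+1) j (by omega) (by omega)
  have hb01 := hgb i (j+1) (by omega) hjm
  have hb11 := hgb (i+1) (j+1) (by omega) hjm
  push_cast at hb00 hb10 hb01 hb11
  rw [show (j:ℝ) - ((i:ℝ)+1) = ((j:ℝ) - i) - 1 from by ring] at hb10
  rw [show ((j:ℝ)+1) - (i:ℝ) = ((j:ℝ) - i) + 1 from by ring] at hb01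
  rw [show ((j:ℝ)+1) - ((i:ℝ)+1) = ((j:ℝ) - i) from by ring] at hb11
  have hD : linInterp f m t - linInterp f m s
      = (1-α)*(1-β) * (f ((j:ℝ)/m) - f ((i:ℝ)/m))
        + α*(1-β) * (f ((j:ℝ)/m) - f (((i:ℝ)+1)/m))
        + (1-α)*β * (f (((j:ℝ)+1)/m) - f ((i:ℝ)/m))
        + α*β * (f (((j:ℝ)+1)/m) - f (((i:ℝ)+1)/m)) := by rw [htr, hsr]; ring
  have hw00 : (0:ℝ) ≤ (1-α)*(1-β) := mul_nonneg (by linarith) (by linarith)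
  have hw10 : (0:ℝ) ≤ α*(1-β) := mul_nonneg hα0 (by linarith)
  have hw01 : (0:ℝ) ≤ (1-α)*β := mul_nonneg (by linarith) hβ0
  have hw11 : (0:ℝ) ≤ α*β := mul_nonneg hα0 hβ0
  have harg : (j:ℝ) + β - ((i:ℝ) + α) = ((j:ℝ) - i) + β - α := by ring
  rw [harg]
  calc |linInterp f m t - linInterp f m s|
      ≤ (1-α)*(1-β) * |f ((j:ℝ)/m) - f ((i:ℝ)/m)|
        + α*(1-β) * |f ((j:ℝ)/m) - f (((i:ℝ)+1)/m)|
        + (1-α)*β * |f (((j:ℝ)+1)/m) - f ((i:ℝ)/m)|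
        + α*β * |f (((j:ℝ)+1)/m) - f (((i:ℝ)+1)/m)| := by
        rw [hD]
        refine (abs4 _ _ _ _).trans ?_
        simp only [abs_mul, abs_of_nonneg (show (0:ℝ) ≤ 1-α by linarith),
          abs_of_nonneg (show (0:ℝ) ≤ 1-β by linarith), abs_of_nonneg hα0, abs_of_nonneg hβ0]
        ring_nf
        exact le_refl _
    _ ≤ (1-α)*(1-β) * ((sqrt 8 / sqrt m) * sqrt ((j:ℝ) - i) + ε)
        + α*(1-β) * ((sqrt 8 / sqrt m) * sqrt (((j:ℝ) - i) - 1) + ε)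
        + (1-α)*β * ((sqrt 8 / sqrt m) * sqrt (((j:ℝ) - i) + 1) + ε)
        + α*β * ((sqrt 8 / sqrt m) * sqrt ((j:ℝ) - i) + ε) := by
        refine add_le_add (add_le_add (add_le_add
          (mul_le_mul_of_nonneg_left hb00 hw00)
          (mul_le_mul_of_nonneg_left hb10 hw10))
          (mul_le_mul_of_nonneg_left hb01 hw01))
          (mul_le_mul_of_nonneg_left hb11 hw11)
    _ = ((1-α)*(1-β)+α*β) * ((sqrt 8 / sqrt m) * sqrt ((j:ℝ) - i) + ε)
        + α*(1-β) * ((sqrt 8 / sqrt m) * sqrt (((j:ℝ) - i) - 1) + ε)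
        + (1-α)*β * ((sqrt 8 / sqrt m) * sqrt (((j:ℝ) - i) + 1) + ε) := by ring
    _ ≤ (sqrt 8 / sqrt m + sqrt 2 * ε) * sqrt (((j:ℝ) - i) + β - α) := by
        refine keyC' hK0 hε hα0 hα1 hβ0 hβ1 hg2 (sqrt_nonneg _) (sq_sqrt (by linarith))
          (sqrt_nonneg _) (sq_sqrt (by linarith)) (sqrt_nonneg _) (sq_sqrt (by linarith))
          ?_ (sq_sqrt (by linarith)) hs21
        rw [show (1:ℝ) = sqrt 1 by simp]
        exact sqrt_le_sqrt (by linarith)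

lemma interp_close (f : ℝ → ℝ) {ε : ℝ} (hε : 0 ≤ ε) {m : ℕ} (hm : 1 ≤ m)
    (hf : ∀ s ∈ Icc (0:ℝ) 1, ∀ t ∈ Icc (0:ℝ) 1, |f t - f s| ≤ sqrt 8 * sqrt |t - s| + ε)
    {t : ℝ} (ht : t ∈ Icc (0:ℝ) 1) :
    |f t - linInterp f m t| ≤ sqrt 8 * sqrt (1/m) + ε := by
  have hm0 : (0:ℝ) < m := by exact_mod_cast hm
  obtain ⟨i, α, him, hα0, hα1, htv, htr⟩ := linInterp_rep f hm ht
  have hmem : ∀ a : ℕ, a ≤ m → ((a:ℝ)/m) ∈ Icc (0:ℝ) 1 := by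
    intro a ha
    exact ⟨by positivity, by rw [div_le_one hm0]; exact_mod_cast ha⟩
  have hmem1 : ((i:ℝ)+1)/m ∈ Icc (0:ℝ) 1 := by
    have := hmem (i+1) him
    push_cast at this
    exact this
  have hd1 : t - (i:ℝ)/m = α/m := by rw [htv]; ring
  have hd2 : t - ((i:ℝ)+1)/m = (α-1)/m := by rw [htv]; ring
  have hsb : ∀ x : ℝ, 0 ≤ x → x ≤ 1 → sqrt (x/m) ≤ sqrt (1/m) := by
    intro x hx0 hx1
    exact sqrt_le_sqrt ((div_le_div_iff_of_pos_right hm0).mpr hx1)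
  have h1 : |f t - f ((i:ℝ)/m)| ≤ sqrt 8 * sqrt (1/m) + ε := by
    have h := hf _ (hmem i (by omega)) t ht
    rw [hd1, abs_of_nonneg (div_nonneg hα0 hm0.le)] at h
    refine h.trans (add_le_add_left (mul_le_mul_of_nonneg_left (hsb α hα0 hα1) (sqrt_nonneg 8)) ε)
  have h2 : |f t - f (((i:ℝ)+1)/m)| ≤ sqrt 8 * sqrt (1/m) + ε := by
    have h := hf _ hmem1 t ht
    rw [hd2, abs_div, abs_of_nonneg hm0.le, abs_of_nonpos (by linarith : α - 1 ≤ 0), neg_sub] at h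
    refine h.trans (add_le_add_left (mul_le_mul_of_nonneg_left
      (hsb (1-α) (by linarith) (by linarith)) (sqrt_nonneg 8)) ε)
  have hD : f t - linInterp f m t = (1-α) * (f t - f ((i:ℝ)/m)) + α * (f t - f (((i:ℝ)+1)/m)) := by
    rw [htr]; ring
  calc |f t - linInterp f m t|
      ≤ (1-α) * |f t - f ((i:ℝ)/m)| + α * |f t - f (((i:ℝ)+1)/m)| := by
        rw [hD]
        refine (abs_add_le _ _).trans ?_
        rw [abs_mul, abs_mul, abs_of_nonneg (by linarith : (0:ℝ) ≤ 1-α), abs_of_nonneg hα0]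
    _ ≤ (1-α) * (sqrt 8 * sqrt (1/m) + ε) + α * (sqrt 8 * sqrt (1/m) + ε) :=
        add_le_add (mul_le_mul_of_nonneg_left h1 (by linarith))
          (mul_le_mul_of_nonneg_left h2 hα0)
    _ = sqrt 8 * sqrt (1/m) + ε := by ring

theorem stmt_19 (f : ℕ → ℝ → ℝ) (ε : ℕ → ℝ)
    (hε : Tendsto ε atTop (nhds 0))
    (hf : ∀ n, ∀ s ∈ Icc (0:ℝ) 1, ∀ t ∈ Icc (0:ℝ) 1,
      |f n t - f n s| ≤ Real.sqrt 8 * Real.sqrt |t - s| + ε n) :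
    ∃ (m : ℕ → ℕ) (c : ℕ → ℝ), Tendsto m atTop atTop ∧ Tendsto c atTop (nhds 0) ∧
      (∀ δ : ℝ, 0 < δ → ∃ N : ℕ, ∀ n ≥ N, ∀ s ∈ Icc (0:ℝ) 1, ∀ t ∈ Icc (0:ℝ) 1,
        |linInterp (f n) (m n) t - linInterp (f n) (m n) s| ≤
          (Real.sqrt 8 + δ) * Real.sqrt |t - s|) ∧
      ∀ n, ∀ t ∈ Icc (0:ℝ) 1, |f n t - linInterp (f n) (m n) t| ≤ c n := by
  have hε0 : ∀ n, 0 ≤ ε n := by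
    intro n
    have h := hf n 0 ⟨le_refl 0, zero_le_one⟩ 0 ⟨le_refl 0, zero_le_one⟩
    simpa using h
  set b : ℕ → ℝ := fun n => ε n + 1/(n+1) with hb
  have hbpos : ∀ n, 0 < b n := fun n => by have := hε0 n; positivity
  have hb0 : Tendsto b atTop (nhds 0) := by
    rw [hb]
    have h2 : Tendsto (fun n : ℕ => 1/((n:ℝ)+1)) atTop (nhds 0) :=
      tendsto_one_div_add_atTop_nhds_zero_nat
    simpa using hε.add h2
  set m : ℕ → ℕ := fun n => ⌈1 / b n⌉₊ with hmdef
  have hm1 : ∀ n, 1 ≤ m n := fun n => Nat.ceil_pos.mpr (one_div_pos.mpr (hbpos n))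
  have hmcast : ∀ n, (0:ℝ) < (m n : ℝ) := fun n => by exact_mod_cast hm1 n
  -- m → ∞
  have hmtop : Tendsto m atTop atTop := by
    have hinv : Tendsto (fun n => 1 / b n) atTop atTop := by
      simp only [one_div]
      exact Filter.Tendsto.inv_tendsto_nhdsGT_zero (tendsto_nhdsWithin_iff.mpr ⟨hb0, Eventually.of_forall hbpos⟩)
    rw [tendsto_atTop]
    intro C
    filter_upwards [hinv.eventually_ge_atTop (C:ℝ)] with n hn
    have : (C:ℝ) ≤ (m n : ℝ) := le_trans hn (Nat.le_ceil _)
    exact_mod_cast this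
  -- the error quantity
  have hkey : Tendsto (fun n => sqrt 2 * ε n * sqrt (m n)) atTop (nhds 0) := by
    have hbound : ∀ n, sqrt 2 * ε n * sqrt (m n) ≤ sqrt 2 * sqrt (b n + b n ^ 2) := by
      intro n
      have h1 : (m n : ℝ) ≤ 1 / b n + 1 :=
        le_of_lt (Nat.ceil_lt_add_one (one_div_pos.mpr (hbpos n)).le)
      have h2 : sqrt (m n) ≤ sqrt (1 / b n + 1) := sqrt_le_sqrt h1
      have h3 : ε n * sqrt (m n) ≤ b n * sqrt (1 / b n + 1) := by
        have hε' : ε n ≤ b n := by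
          simp only [hb]
          have : (0:ℝ) < 1/((n:ℝ)+1) := by positivity
          linarith
        exact mul_le_mul hε' h2 (sqrt_nonneg _) (hbpos n).le
      have h4 : b n * sqrt (1 / b n + 1) = sqrt (b n + b n ^ 2) := by
        rw [show b n * sqrt (1 / b n + 1) = sqrt ((b n)^2) * sqrt (1 / b n + 1) by
            rw [sqrt_sq (hbpos n).le],
          ← sqrt_mul (sq_nonneg _)]
        congr 1
        field_simp [(hbpos n).ne']
      calc sqrt 2 * ε n * sqrt (m n) = sqrt 2 * (ε n * sqrt (m n)) := by ring
        _ ≤ sqrt 2 * (b n * sqrt (1 / b n + 1)) :=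
            mul_le_mul_of_nonneg_left h3 (sqrt_nonneg 2)
        _ = sqrt 2 * sqrt (b n + b n ^ 2) := by rw [h4]
    have hlim : Tendsto (fun n => sqrt 2 * sqrt (b n + b n ^ 2)) atTop (nhds 0) := by
      have h1 : Tendsto (fun n => b n + b n ^ 2) atTop (nhds 0) := by
        have := hb0.add (hb0.pow 2)
        simpa using this
      have h2 : Tendsto (fun n => sqrt (b n + b n ^ 2)) atTop (nhds 0) := by
        have := (Real.continuous_sqrt.tendsto' 0 0 sqrt_zero).comp h1
        exact this
      have := h2.const_mul (sqrt 2)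
      simpa using this
    exact squeeze_zero
      (fun n => mul_nonneg (mul_nonneg (sqrt_nonneg 2) (hε0 n)) (sqrt_nonneg _)) hbound hlim
  refine ⟨m, fun n => sqrt 8 * sqrt (1/(m n)) + ε n, hmtop, ?_, ?_, ?_⟩
  · -- c → 0
    have h1 : Tendsto (fun n => (1:ℝ)/(m n)) atTop (nhds 0) := by
      have := (tendsto_natCast_atTop_atTop (R := ℝ)).comp hmtop
      simpa [one_div, Function.comp_def, Pi.inv_def] using this.inv_tendsto_atTop
    have h2 : Tendsto (fun n => sqrt (1/(m n))) atTop (nhds 0) :=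
      (Real.continuous_sqrt.tendsto' 0 0 sqrt_zero).comp h1
    have h3 := (h2.const_mul (sqrt 8)).add hε
    simpa using h3
  · -- Hölder
    intro δ hδ
    have hev : ∀ᶠ n in atTop, sqrt 2 * ε n * sqrt (m n) ≤ δ :=
      hkey.eventually (eventually_le_nhds hδ)
    obtain ⟨N, hN⟩ := eventually_atTop.mp hev
    refine ⟨N, fun n hn s hs t ht => ?_⟩
    have hkδ := hN n hn
    rcases le_total s t with h | h
    · have hmm := master (f n) (hε0 n) (hm1 n) (hf n) hs ht h
      rw [abs_of_nonneg (sub_nonneg.mpr h)]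
      exact hmm.trans (mul_le_mul_of_nonneg_right (by linarith) (sqrt_nonneg _))
    · have hmm := master (f n) (hε0 n) (hm1 n) (hf n) ht hs h
      rw [abs_sub_comm (linInterp (f n) (m n) t) _, abs_sub_comm t s,
        abs_of_nonneg (sub_nonneg.mpr h)]
      exact hmm.trans (mul_le_mul_of_nonneg_right (by linarith) (sqrt_nonneg _))
  · intro n t ht
    exact interp_close (f n) (hε0 n) (hm1 n) (hf n) ht
end
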